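/- Let X be a compact topological 1-manifold with boundary. Then its boundary ∂X is a finite set with an even number of points. -/

import Mathlib

open scoped Manifold
open Set Filter Topology

noncomputable section

namespace Stmt2Aux

abbrev Hs := EuclideanHalfSpace 1

/-- coordinate of a half-space point -/
def q (y : Hs) : ℝ := y.1 0

def r (t : ℝ) : Hs := ⟨(EuclideanSpace.equiv (Fin 1) ℝ).symm (fun _ => max t 0), by
  simpa using le_max_right t 0⟩

lemma q_nonneg (y : Hs) : 0 ≤ q y := y.2

lemma continuous_q : Continuous q :=
  (EuclideanSpace.proj (0 : Fin 1)).continuous.comp continuous_subtype_val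

lemma continuous_r : Continuous r := by
  refine Continuous.subtype_mk ?_ _
  exact (EuclideanSpace.equiv (Fin 1) ℝ).symm.continuous.comp
    (continuous_pi fun _ => continuous_id.max continuous_const)

lemma q_r {t : ℝ} (h : 0 ≤ t) : q (r t) = t := by
  simp [q, r, EuclideanSpace.equiv, max_eq_left h]

lemma r_q (y : Hs) : r (q y) = y := by
  apply Subtype.ext
  have : max (q y) 0 = q y := max_eq_left (q_nonneg y)
  ext i
  have hi : i = 0 := Subsingleton.elim i 0
  subst hi
  simp [r, EuclideanSpace.equiv]
  exact max_eq_left (q_nonneg y)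

lemma q_inj : Function.Injective q := by
  intro a b h
  rw [← r_q a, ← r_q b, h]

variable {X : Type*} [TopologicalSpace X] [T2Space X] [CompactSpace X] [ChartedSpace Hs X]

lemma mem_bd_iff {x : X} : x ∈ (𝓡∂ 1).boundary X ↔ q (chartAt Hs x x) = 0 := by
  have h1 : x ∈ (𝓡∂ 1).boundary X ↔ (𝓡∂ 1).IsBoundaryPoint x := Iff.rfl
  rw [h1, ModelWithCorners.isBoundaryPoint_iff,
    frontier_range_modelWithCornersEuclideanHalfSpace, extChartAt_coe]
  simp only [Function.comp_apply, mem_setOf_eq]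
  constructor
  · intro h; exact h.symm
  · intro h; exact h.symm

/-- A "real chart": an open set of `X` homeomorphic to `[0,1)` (half = true)
or `(-1,1)` (half = false), realized by maps to and from `ℝ`. -/
structure RC (X : Type*) [TopologicalSpace X] : Type _ where
  V : Set X
  psi : X → ℝ  -- the chart map
  inv : ℝ → X  -- its inverse
  half : Bool
  opn : IsOpen V
  cont : ContinuousOn psi V
  img : psi '' V = if half then Ico (0:ℝ) 1 else Ioo (-1:ℝ) 1
  linv : ∀ ⦃v⦄, v ∈ V → inv (psi v) = v
  cinv : ContinuousOn inv (if half then Ico (0:ℝ) 1 else Ioo (-1:ℝ) 1)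

namespace RC

variable {X : Type*} [TopologicalSpace X] (rc : RC X)

/-- The model interval of a real chart. -/
def I (rc : RC X) : Set ℝ := if rc.half then Ico (0:ℝ) 1 else Ioo (-1:ℝ) 1

lemma img' : rc.psi '' rc.V = rc.I := rc.img

lemma cinv' : ContinuousOn rc.inv rc.I := rc.cinv

lemma mem_I {v : X} (hv : v ∈ rc.V) : rc.psi v ∈ rc.I := by
  rw [← rc.img']; exact mem_image_of_mem _ hv

lemma I_subset_Ico : rc.half = true → rc.I = Ico (0:ℝ) 1 := by intro h; simp [I, h]

lemma I_subset_Ioo : rc.half = false → rc.I = Ioo (-1:ℝ) 1 := by intro h; simp [I, h]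

lemma injOn : InjOn rc.psi rc.V := by
  intro a ha b hb h
  rw [← rc.linv ha, ← rc.linv hb, h]

lemma inv_mem {s : ℝ} (hs : s ∈ rc.I) : rc.inv s ∈ rc.V := by
  rw [← rc.img'] at hs
  obtain ⟨v, hv, rfl⟩ := hs
  rw [rc.linv hv]; exact hv

lemma rinv {s : ℝ} (hs : s ∈ rc.I) : rc.psi (rc.inv s) = s := by
  rw [← rc.img'] at hs
  obtain ⟨v, hv, rfl⟩ := hs
  rw [rc.linv hv]

lemma inv_injOn : InjOn rc.inv rc.I := by
  intro a ha b hb h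
  rw [← rc.rinv ha, ← rc.rinv hb, h]

lemma inv_img : rc.inv '' rc.I = rc.V := by
  apply Subset.antisymm
  · rintro _ ⟨s, hs, rfl⟩; exact rc.inv_mem hs
  · intro v hv
    exact ⟨rc.psi v, rc.mem_I hv, rc.linv hv⟩

/-- Negation of an open-type chart. -/
def neg (rc : RC X) (h : rc.half = false) : RC X where
  V := rc.V
  psi := fun x => -rc.psi x
  inv := fun s => rc.inv (-s)
  half := false
  opn := rc.opn
  cont := rc.cont.neg
  img := by
    have : (fun x => -rc.psi x) '' rc.V = (fun t : ℝ => -t) '' (rc.psi '' rc.V) := by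
      rw [Set.image_image]
    rw [this, rc.img, h]
    simp only [Bool.false_eq_true, if_false]
    rw [Set.image_neg_eq_neg]; simp
  linv := by
    intro v hv
    simp only [neg_neg]
    exact rc.linv hv
  cinv := by
    simp only [Bool.false_eq_true, if_false]
    have h2 := rc.cinv'
    rw [rc.I_subset_Ioo h] at h2
    refine ContinuousOn.comp h2 continuousOn_neg ?_
    intro t ht
    simp only [mem_Ioo] at ht ⊢
    constructor <;> linarith [ht.1, ht.2]

end RC

section Core

variable {X : Type*} [TopologicalSpace X] [T2Space X] [CompactSpace X] [ChartedSpace Hs X]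

/-- Monotonicity dichotomy for continuous injective real functions on ord-connected sets. -/
lemma strictMonoOn_or_strictAntiOn {f : ℝ → ℝ} {S : Set ℝ} (hS : S.OrdConnected)
    (hc : ContinuousOn f S) (hi : InjOn f S) :
    StrictMonoOn f S ∨ StrictAntiOn f S := by
  by_cases hex : ∃ a ∈ S, ∃ b ∈ S, a < b
  · obtain ⟨a, ha, b, hb, hab⟩ := hex
    have key : ∀ {x y : ℝ}, x ∈ S → y ∈ S → x < y → (f a < f b ↔ f x < f y) := by
      intro x y hx hy hxy
      set m := min a x with hm
      set M := max b y with hM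
      have hmS : m ∈ S := by
        rcases min_cases a x with ⟨h, -⟩ | ⟨h, -⟩ <;> rw [hm, h] <;> assumption
      have hMS : M ∈ S := by
        rcases max_cases b y with ⟨h, -⟩ | ⟨h, -⟩ <;> rw [hM, h] <;> assumption
      have hma : m ≤ a := min_le_left _ _
      have hmx : m ≤ x := min_le_right _ _
      have hbM : b ≤ M := le_max_left _ _
      have hyM : y ≤ M := le_max_right _ _
      have hmM : m ≤ M := le_trans hma (le_trans hab.le hbM)
      have hsub : Icc m M ⊆ S := hS.out hmS hMS
      have hamem : a ∈ Icc m M := ⟨hma, le_trans hab.le hbM⟩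
      have hbmem : b ∈ Icc m M := ⟨le_trans hma hab.le, hbM⟩
      have hxmem : x ∈ Icc m M := ⟨hmx, le_trans hxy.le hyM⟩
      have hymem : y ∈ Icc m M := ⟨le_trans hmx hxy.le, hyM⟩
      rcases ContinuousOn.strictMonoOn_of_injOn_Icc' hmM (hc.mono hsub) (hi.mono hsub) with
        hmono | hanti
      · exact ⟨fun _ => hmono hxmem hymem hxy, fun _ => hmono hamem hbmem hab⟩
      · constructor
        · intro h; exact absurd (hanti hamem hbmem hab) (not_lt.2 h.le)
        · intro h; exact absurd (hanti hxmem hymem hxy) (not_lt.2 h.le)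
    have hfab : f a ≠ f b := fun h => hab.ne (hi ha hb h)
    rcases hfab.lt_or_gt with hlt | hgt
    · left; intro x hx y hy hxy; exact (key hx hy hxy).1 hlt
    · right; intro x hx y hy hxy
      have h1 : ¬ f x < f y := fun h => absurd ((key hx hy hxy).2 h) (not_lt.2 hgt.le)
      have h2 : f x ≠ f y := fun h => hxy.ne (hi hx hy h)
      exact lt_of_le_of_ne (not_lt.1 h1) h2.symm
  · push_neg at hex
    left; intro x hx y hy hxy; exact absurd hxy (not_lt.2 (hex x hx y hy))

/-- Core contradiction: a continuous injective curve cannot pass through the `0`-point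
of a nonnegative injective continuous "half chart". -/
lemma core_contra {x : X} {V : Set X} {ψ : X → ℝ} (hV : IsOpen V) (hxV : x ∈ V)
    (hc : ContinuousOn ψ V) (hi : InjOn ψ V) (hnn : ∀ v ∈ V, 0 ≤ ψ v) (hx0 : ψ x = 0)
    {Γ : ℝ → X} {s δ : ℝ} (hδ : 0 < δ) (hΓc : ContinuousOn Γ (Ioo (s - δ) (s + δ)))
    (hΓi : InjOn Γ (Ioo (s - δ) (s + δ))) (hΓs : Γ s = x) : False := by
  have hsmem : s ∈ Ioo (s - δ) (s + δ) := by constructor <;> linarith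
  have hnhds : Γ ⁻¹' V ∩ Ioo (s - δ) (s + δ) ∈ 𝓝 s := by
    have h1 : ContinuousWithinAt Γ (Ioo (s - δ) (s + δ)) s := hΓc s hsmem
    have h2 : Γ ⁻¹' V ∈ 𝓝[Ioo (s - δ) (s + δ)] s := h1.preimage_mem_nhdsWithin
      (hV.mem_nhds (by rw [hΓs]; exact hxV))
    have h3 : 𝓝[Ioo (s - δ) (s + δ)] s = 𝓝 s := by
      rw [nhdsWithin_eq_nhds]
      exact isOpen_Ioo.mem_nhds hsmem
    rw [h3] at h2
    exact inter_mem h2 (isOpen_Ioo.mem_nhds hsmem)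
  obtain ⟨ε, hε, hball⟩ := Metric.mem_nhds_iff.1 hnhds
  rw [Real.ball_eq_Ioo] at hball
  set g : ℝ → ℝ := fun t => ψ (Γ t) with hg
  have hmaps : Icc (s - ε/2) (s + ε/2) ⊆ Γ ⁻¹' V ∩ Ioo (s - δ) (s + δ) := by
    intro t ht
    exact hball ⟨by simp at ht ⊢; linarith [ht.1], by simp at ht ⊢; linarith [ht.2]⟩
  have hgc : ContinuousOn g (Icc (s - ε/2) (s + ε/2)) := by
    refine hc.comp (hΓc.mono ?_) ?_
    · intro t ht; exact (hmaps ht).2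
    · intro t ht; exact (hmaps ht).1
  have hgi : InjOn g (Icc (s - ε/2) (s + ε/2)) := by
    intro t1 h1 t2 h2 he
    exact hΓi (hmaps h1).2 (hmaps h2).2 (hi (hmaps h1).1 (hmaps h2).1 he)
  have hle : s - ε/2 ≤ s + ε/2 := by linarith
  have hsmem2 : s ∈ Icc (s - ε/2) (s + ε/2) := by constructor <;> linarith
  have hlmem : s - ε/2 ∈ Icc (s - ε/2) (s + ε/2) := by constructor <;> linarith
  have hrmem : s + ε/2 ∈ Icc (s - ε/2) (s + ε/2) := by constructor <;> linarith
  have hgs : g s = 0 := by rw [hg]; simp only [hΓs]; exact hx0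
  rcases ContinuousOn.strictMonoOn_of_injOn_Icc' hle hgc hgi with hmono | hanti
  · have := hmono hlmem hsmem2 (by linarith)
    rw [hgs] at this
    exact absurd this (not_lt.2 (hnn _ (hmaps hlmem).1))
  · have := hanti hsmem2 hrmem (by linarith)
    rw [hgs] at this
    exact absurd this (not_lt.2 (hnn _ (hmaps hrmem).1))

/-- A point through which an injective continuous curve passes is not a boundary point. -/
lemma not_bd_of_param {x : X} {Γ : ℝ → X} {s δ : ℝ} (hδ : 0 < δ)
    (hΓc : ContinuousOn Γ (Ioo (s - δ) (s + δ))) (hΓi : InjOn Γ (Ioo (s - δ) (s + δ)))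
    (hΓs : Γ s = x) : x ∉ (𝓡∂ 1).boundary X := by
  intro hbd
  set φ := chartAt Hs x with hφ
  refine core_contra (V := φ.source) (ψ := fun y => q (φ y)) φ.open_source
    (mem_chart_source Hs x) (continuous_q.comp_continuousOn φ.continuousOn)
    ?_ (fun v _ => q_nonneg _) (mem_bd_iff.1 hbd) hδ hΓc hΓi hΓs
  intro a ha b hb h
  exact φ.injOn ha hb (q_inj h)

/-- Points of a real chart with nonzero coordinate (or in an open-type chart) are
not boundary points. -/
lemma not_bd_of_rc (rc : RC X) {y : X} (hy : y ∈ rc.V)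
    (hne : rc.half = true → rc.psi y ≠ 0) : y ∉ (𝓡∂ 1).boundary X := by
  have hyI := rc.mem_I hy
  set s := rc.psi y with hs
  -- bounds : lo < s < 1 with Ioo lo 1 ⊆ rc.I
  have hbounds : ∃ lo : ℝ, lo < s ∧ s < 1 ∧ Ioo lo 1 ⊆ rc.I := by
    cases hh : rc.half
    · rw [rc.I_subset_Ioo hh] at hyI ⊢
      exact ⟨-1, hyI.1, hyI.2, fun t ht => ht⟩
    · rw [rc.I_subset_Ico hh] at hyI ⊢
      refine ⟨0, lt_of_le_of_ne hyI.1 (Ne.symm (hne hh)), hyI.2, fun t ht => ⟨ht.1.le, ht.2⟩⟩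
  obtain ⟨lo, hlo, hs1, hsub⟩ := hbounds
  set δ := min (s - lo) (1 - s) with hδdef
  have hδ : 0 < δ := lt_min (by linarith) (by linarith)
  have hIoo : Ioo (s - δ) (s + δ) ⊆ rc.I := by
    intro t ht
    refine hsub ⟨?_, ?_⟩
    · have : δ ≤ s - lo := min_le_left _ _
      have := ht.1; linarith
    · have : δ ≤ 1 - s := min_le_right _ _
      have := ht.2; linarith
  refine not_bd_of_param (Γ := rc.inv) (s := s) hδ ((rc.cinv'.mono hIoo)) (rc.inv_injOn.mono hIoo) ?_
  rw [hs, rc.linv hy]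

/-- Conversely, a zero point of a half-type chart is a boundary point. -/
lemma mem_bd_of_half_zero (rc : RC X) (hh : rc.half = true) {w : X} (hw : w ∈ rc.V)
    (h0 : rc.psi w = 0) : w ∈ (𝓡∂ 1).boundary X := by
  by_contra hbd
  set φ := chartAt Hs w with hφ
  set u := q (φ w) with hu
  have hu0 : 0 ≤ u := q_nonneg _
  have hune : u ≠ 0 := fun h => hbd (mem_bd_iff.2 h)
  have hupos : 0 < u := lt_of_le_of_ne hu0 (Ne.symm hune)
  have hTr : IsOpen {t : ℝ | r t ∈ φ.target} := φ.open_target.preimage continuous_r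
  have huTr : u ∈ {t : ℝ | r t ∈ φ.target} := by
    have h1 : r u = φ w := r_q (φ w)
    rw [mem_setOf_eq, h1]
    exact φ.map_source (mem_chart_source Hs w)
  obtain ⟨δ0, hδ0, hball⟩ := Metric.isOpen_iff.1 hTr u huTr
  rw [Real.ball_eq_Ioo] at hball
  set δ := min δ0 u with hδdef
  have hδ : 0 < δ := lt_min hδ0 hupos
  have hsub : Ioo (u - δ) (u + δ) ⊆ {t : ℝ | r t ∈ φ.target} := by
    intro t ht
    refine hball ⟨?_, ?_⟩
    · have : δ ≤ δ0 := min_le_left _ _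
      have := ht.1; linarith
    · have : δ ≤ δ0 := min_le_left _ _
      have := ht.2; linarith
  have hpos : ∀ t ∈ Ioo (u - δ) (u + δ), 0 ≤ t := by
    intro t ht
    have : δ ≤ u := min_le_right _ _
    have := ht.1; linarith
  have hnn : ∀ v ∈ rc.V, 0 ≤ rc.psi v := by
    intro v hv
    have := rc.mem_I hv
    rw [rc.I_subset_Ico hh] at this
    exact this.1
  refine core_contra rc.opn hw rc.cont rc.injOn hnn h0 (Γ := fun t => φ.symm (r t)) (s := u)
    hδ ?_ ?_ ?_
  · exact φ.continuousOn_symm.comp continuous_r.continuousOn hsub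
  · intro t1 h1 t2 h2 he
    have e1 : r t1 = r t2 := φ.symm.injOn (by exact hsub h1) (by exact hsub h2) he
    have : q (r t1) = q (r t2) := by rw [e1]
    rwa [q_r (hpos _ h1), q_r (hpos _ h2)] at this
  · show φ.symm (r u) = w
    rw [r_q (φ w)]
    exact φ.left_inv (mem_chart_source Hs w)

/-- Every point of `X` lies in a real chart centered at it; the chart is half-type
iff the point is a boundary point. -/
lemma exists_rc (x : X) : ∃ rc : RC X, x ∈ rc.V ∧ rc.psi x = 0 ∧
    (rc.half = true ↔ x ∈ (𝓡∂ 1).boundary X) := by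
  classical
  set φ := chartAt Hs x with hφ
  set c : X → ℝ := fun y => q (φ y) with hc
  have hccont : ContinuousOn c φ.source := continuous_q.comp_continuousOn φ.continuousOn
  have hcinj : InjOn c φ.source := fun a ha b hb h => φ.injOn ha hb (q_inj h)
  set u := c x with hu
  have hu0 : 0 ≤ u := q_nonneg _
  have hTr : IsOpen {t : ℝ | r t ∈ φ.target} := φ.open_target.preimage continuous_r
  have huTr : u ∈ {t : ℝ | r t ∈ φ.target} := by
    have h1 : r u = φ x := r_q (φ x)
    rw [mem_setOf_eq, h1]
    exact φ.map_source (mem_chart_source Hs x)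
  obtain ⟨δ0, hδ0, hball⟩ := Metric.isOpen_iff.1 hTr u huTr
  rw [Real.ball_eq_Ioo] at hball
  -- facts used in both cases
  have hsymm : ∀ t, t ∈ Ioo (u - δ0) (u + δ0) → 0 ≤ t →
      φ (φ.symm (r t)) = r t ∧ φ.symm (r t) ∈ φ.source ∧ c (φ.symm (r t)) = t := by
    intro t ht htpos
    have h1 : r t ∈ φ.target := hball ht
    refine ⟨φ.right_inv h1, φ.map_target h1, ?_⟩
    show q (φ (φ.symm (r t))) = t
    rw [φ.right_inv h1, q_r htpos]
  by_cases hbd : u = 0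
  · -- half-type chart
    refine ⟨⟨φ.source ∩ c ⁻¹' (Iio δ0), fun y => c y / δ0, fun s => φ.symm (r (δ0 * s)), true,
      hccont.isOpen_inter_preimage φ.open_source isOpen_Iio,
      (hccont.mono inter_subset_left).div_const _, ?_, ?_, ?_⟩, ?_, ?_, ?_⟩
    · -- image is [0,1)
      simp only [if_pos]
      apply Subset.antisymm
      · rintro _ ⟨y, ⟨hy1, hy2⟩, rfl⟩
        have h0 : 0 ≤ c y := q_nonneg _
        simp only [mem_preimage, mem_Iio] at hy2
        exact ⟨div_nonneg h0 hδ0.le, (div_lt_one hδ0).2 hy2⟩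
      · rintro s ⟨hs0, hs1⟩
        set t := δ0 * s with ht
        have htpos : 0 ≤ t := mul_nonneg hδ0.le hs0
        have htmem : t ∈ Ioo (u - δ0) (u + δ0) := by
          rw [hbd]; constructor
          · simp only [zero_sub, ht]; nlinarith
          · simp only [zero_add, ht]; nlinarith
        obtain ⟨he1, he2, he3⟩ := hsymm t htmem htpos
        refine ⟨φ.symm (r t), ⟨he2, ?_⟩, ?_⟩
        · simp only [mem_preimage, mem_Iio, he3]
          nlinarith
        · show c (φ.symm (r t)) / δ0 = s
          rw [he3, ht]
          field_simp
    · -- left inverse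
      rintro v ⟨hv1, hv2⟩
      show φ.symm (r (δ0 * (c v / δ0))) = v
      have h1 : δ0 * (c v / δ0) = c v := by field_simp
      rw [h1]
      have h2 : r (c v) = φ v := r_q (φ v)
      rw [h2]
      exact φ.left_inv hv1
    · -- continuity of inverse on [0,1)
      simp only [if_pos]
      refine φ.continuousOn_symm.comp (continuous_r.continuousOn.comp
        (continuous_const.mul continuous_id).continuousOn (fun t _ => mem_univ _)) ?_
      rintro s ⟨hs0, hs1⟩
      refine hball ?_
      rw [hbd]
      constructor
      · simp only [zero_sub]; nlinarith
      · simp only [zero_add]; nlinarith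
    · exact ⟨mem_chart_source Hs x, by simp only [mem_preimage, mem_Iio, ← hu, hbd]; exact hδ0⟩
    · simp only [← hu, hbd, zero_div]
    · simp only [true_iff]
      exact mem_bd_iff.2 hbd
  · -- open-type chart
    have hupos : 0 < u := lt_of_le_of_ne hu0 (Ne.symm hbd)
    set δ := min δ0 u with hδdef
    have hδ : 0 < δ := lt_min hδ0 hupos
    have hδu : δ ≤ u := min_le_right _ _
    have hδδ0 : δ ≤ δ0 := min_le_left _ _
    have hIoosub : Ioo (u - δ) (u + δ) ⊆ Ioo (u - δ0) (u + δ0) := by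
      intro t ht; exact ⟨by linarith [ht.1], by linarith [ht.2]⟩
    refine ⟨⟨φ.source ∩ c ⁻¹' (Ioo (u - δ) (u + δ)), fun y => (c y - u) / δ,
      fun s => φ.symm (r (u + δ * s)), false,
      hccont.isOpen_inter_preimage φ.open_source isOpen_Ioo,
      ((hccont.mono inter_subset_left).sub continuousOn_const).div_const _, ?_, ?_, ?_⟩,
      ?_, ?_, ?_⟩
    · -- image is (-1,1)
      simp only [Bool.false_eq_true, if_false]
      apply Subset.antisymm
      · rintro _ ⟨y, ⟨hy1, hy2⟩, rfl⟩
        simp only [mem_preimage, mem_Ioo] at hy2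
        constructor
        · rw [lt_div_iff₀ hδ]; linarith [hy2.1]
        · rw [div_lt_one hδ]; linarith [hy2.2]
      · rintro s ⟨hs0, hs1⟩
        set t := u + δ * s with ht
        have htpos : 0 ≤ t := by nlinarith
        have htmem' : t ∈ Ioo (u - δ) (u + δ) := by constructor <;> nlinarith
        obtain ⟨he1, he2, he3⟩ := hsymm t (hIoosub htmem') htpos
        refine ⟨φ.symm (r t), ⟨he2, by simpa only [mem_preimage, he3] using htmem'⟩, ?_⟩
        show (c (φ.symm (r t)) - u) / δ = s
        rw [he3, ht]
        field_simp
        ring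
    · -- left inverse
      rintro v ⟨hv1, hv2⟩
      show φ.symm (r (u + δ * ((c v - u) / δ))) = v
      have h1 : u + δ * ((c v - u) / δ) = c v := by field_simp; ring
      rw [h1]
      have h2 : r (c v) = φ v := r_q (φ v)
      rw [h2]
      exact φ.left_inv hv1
    · -- continuity of inverse on (-1,1)
      simp only [Bool.false_eq_true, if_false]
      refine φ.continuousOn_symm.comp (continuous_r.continuousOn.comp
        (continuous_const.add (continuous_const.mul continuous_id)).continuousOn
        (fun t _ => mem_univ _)) ?_
      rintro s ⟨hs0, hs1⟩
      refine hball ⟨by nlinarith, by nlinarith⟩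
    · refine ⟨mem_chart_source Hs x, ?_⟩
      simp only [mem_preimage, mem_Ioo, ← hu]
      constructor <;> linarith
    · simp only [← hu, sub_self, zero_div]
    · simp only [Bool.false_eq_true, false_iff]
      intro hmem
      exact hbd (mem_bd_iff.1 hmem)

lemma bd_closed : IsClosed ((𝓡∂ 1).boundary X) := by
  rw [← isOpen_compl_iff]
  rw [isOpen_iff_forall_mem_open]
  intro x hx
  obtain ⟨rc, hxV, hx0, hiff⟩ := exists_rc x
  have hhalf : rc.half = false := by
    cases hh : rc.half
    · rfl
    · exact absurd (hiff.1 hh) hx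
  refine ⟨rc.V, fun y hy => not_bd_of_rc rc hy ?_, rc.opn, hxV⟩
  intro h; rw [h] at hhalf; exact absurd hhalf (by simp)

lemma bd_isolated {x : X} (hx : x ∈ (𝓡∂ 1).boundary X) :
    ∃ W : Set X, IsOpen W ∧ x ∈ W ∧ (𝓡∂ 1).boundary X ∩ W ⊆ {x} := by
  obtain ⟨rc, hxV, hx0, hiff⟩ := exists_rc x
  refine ⟨rc.V, rc.opn, hxV, ?_⟩
  rintro y ⟨hybd, hyV⟩
  by_cases h0 : rc.psi y = 0
  · have : y = x := rc.injOn hyV hxV (by rw [h0, hx0])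
    exact this
  · exact absurd hybd (not_bd_of_rc rc hyV (fun _ => h0))

lemma bd_finite : ((𝓡∂ 1).boundary X).Finite := by
  classical
  have hcpt : IsCompact ((𝓡∂ 1).boundary X) := bd_closed.isCompact
  have hch : ∀ x : ((𝓡∂ 1).boundary X : Set X), ∃ W : Set X, IsOpen W ∧ (x : X) ∈ W ∧
      (𝓡∂ 1).boundary X ∩ W ⊆ {(x : X)} := fun x => bd_isolated x.2
  choose W hWopen hWmem hWsub using hch
  obtain ⟨t, ht⟩ := hcpt.elim_finite_subcover W hWopen
    (fun x hx => mem_iUnion.2 ⟨⟨x, hx⟩, hWmem ⟨x, hx⟩⟩)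
  have hfin : ((fun b : ((𝓡∂ 1).boundary X : Set X) => (b : X)) '' (t : Set _)).Finite :=
    Set.Finite.image _ t.finite_toSet
  refine Finite.subset hfin ?_
  intro x hx
  obtain ⟨b, hbt, hbW⟩ := by
    have := ht hx
    simpa only [mem_iUnion, exists_prop] using this
  have : x = (b : X) := hWsub b ⟨hx, hbW⟩
  exact ⟨b, hbt, this.symm⟩

end Core

/-- An arc in `X` starting at `b`: an open subset homeomorphic to `[0, c)` with `0 ↦ b`. -/
structure Arc (X : Type*) [TopologicalSpace X] (b : X) : Type _ where
  c : ℝ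
  pos : 0 < c
  gam : ℝ → X
  ginv : X → ℝ
  start : gam 0 = b
  cont : ContinuousOn gam (Ico 0 c)
  opn : IsOpen (gam '' Ico 0 c)
  linv : ∀ ⦃t⦄, t ∈ Ico 0 c → ginv (gam t) = t
  cinv : ContinuousOn ginv (gam '' Ico 0 c)

namespace Arc

variable {X : Type*} [TopologicalSpace X] {b : X} (a : Arc X b)

/-- The underlying set of an arc. -/
def U (a : Arc X b) : Set X := a.gam '' Ico 0 a.c

lemma mem_U {t : ℝ} (ht : t ∈ Ico 0 a.c) : a.gam t ∈ a.U := mem_image_of_mem _ ht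

lemma b_mem : b ∈ a.U := by
  have := a.mem_U ⟨le_rfl, a.pos⟩
  rwa [a.start] at this

lemma injOn : InjOn a.gam (Ico 0 a.c) := by
  intro s hs t ht h
  rw [← a.linv hs, ← a.linv ht, h]

lemma opn' : IsOpen a.U := a.opn

lemma ginv_spec {x : X} (hx : x ∈ a.U) : a.ginv x ∈ Ico 0 a.c ∧ a.gam (a.ginv x) = x := by
  obtain ⟨t, ht, rfl⟩ := hx
  rw [a.linv ht]
  exact ⟨ht, rfl⟩

lemma cinv' : ContinuousOn a.ginv a.U := a.cinv

/-- Relative openness of preimages of open sets along the arc. -/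
lemma rel_open {V : Set X} (hV : IsOpen V) {t : ℝ} (ht : t ∈ Ico 0 a.c)
    (htV : a.gam t ∈ V) : ∃ ε > 0, ∀ s ∈ Ico 0 a.c, |s - t| < ε → a.gam s ∈ V := by
  have h1 : ContinuousWithinAt a.gam (Ico 0 a.c) t := a.cont t ht
  have h2 : a.gam ⁻¹' V ∈ 𝓝[Ico 0 a.c] t := h1.preimage_mem_nhdsWithin (hV.mem_nhds htV)
  rw [Metric.mem_nhdsWithin_iff] at h2
  obtain ⟨ε, hε, hsub⟩ := h2
  refine ⟨ε, hε, fun s hs hdist => ?_⟩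
  exact hsub ⟨by rwa [Metric.mem_ball, Real.dist_eq], hs⟩

end Arc

section Merge

variable {X : Type*} [TopologicalSpace X] [T2Space X] [CompactSpace X] [ChartedSpace Hs X]
variable {b : X} (a : Arc X b) (rc : RC X)

/-- The times at which the arc is inside the chart. -/
def Tset (a : Arc X b) (rc : RC X) : Set ℝ := {t ∈ Ico 0 a.c | a.gam t ∈ rc.V}

/-- The transition map. -/
def sig (a : Arc X b) (rc : RC X) : ℝ → ℝ := fun t => rc.psi (a.gam t)

lemma Tset_subset : Tset a rc ⊆ Ico 0 a.c := fun _ ht => ht.1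

lemma sig_contOn : ContinuousOn (sig a rc) (Tset a rc) := by
  refine rc.cont.comp (a.cont.mono (Tset_subset a rc)) ?_
  intro t ht; exact ht.2

lemma sig_injOn : InjOn (sig a rc) (Tset a rc) := by
  intro s hs t ht h
  exact a.injOn hs.1 ht.1 (rc.injOn hs.2 ht.2 h)

lemma sig_mem_I {t : ℝ} (ht : t ∈ Tset a rc) : sig a rc t ∈ rc.I := rc.mem_I ht.2

lemma sig_lt_one {t : ℝ} (ht : t ∈ Tset a rc) : sig a rc t < 1 := by
  have := sig_mem_I a rc ht
  unfold RC.I at this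
  split at this
  · exact this.2
  · exact this.2

lemma neg_one_lt_sig {t : ℝ} (ht : t ∈ Tset a rc) : -1 < sig a rc t := by
  have := sig_mem_I a rc ht
  unfold RC.I at this
  split at this
  · linarith [this.1]
  · exact this.1

/-- Right-stop construction: if `t1 ∈ T` and `tstar ∉ T` with `t1 < tstar ≤ c`, there is a
first exit `r1`. -/
lemma right_stop {t1 tstar : ℝ} (h1 : t1 ∈ Tset a rc) (h2 : tstar ∉ Tset a rc)
    (hlt : t1 < tstar) (hle : tstar ≤ a.c) :
    ∃ r1, t1 < r1 ∧ r1 ≤ tstar ∧ r1 ∉ Tset a rc ∧ Ico t1 r1 ⊆ Tset a rc := by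
  classical
  set S := Icc t1 tstar \ Tset a rc with hS
  have hSne : S.Nonempty := ⟨tstar, ⟨hlt.le, le_rfl⟩, h2⟩
  have hSbdd : BddBelow S := ⟨t1, fun s hs => hs.1.1⟩
  set r1 := sInf S with hr1
  have hr1mem : t1 ≤ r1 := le_csInf hSne (fun s hs => hs.1.1)
  have hr1le : r1 ≤ tstar := csInf_le hSbdd ⟨⟨hlt.le, le_rfl⟩, h2⟩
  have hIcoT : Ico t1 r1 ⊆ Tset a rc := by
    intro s hs
    by_contra hsT
    have : s ∈ S := ⟨⟨hs.1, le_trans hs.2.le hr1le⟩, hsT⟩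
    exact absurd (csInf_le hSbdd this) (not_le.2 hs.2)
  have hr1T : r1 ∉ Tset a rc := by
    intro hr1T
    have hr1Ico : r1 ∈ Ico 0 a.c := hr1T.1
    obtain ⟨ε, hε, hball⟩ := a.rel_open rc.opn hr1Ico hr1T.2
    set ε' := min ε (a.c - r1) with hε'
    have hε'pos : 0 < ε' := lt_min hε (by linarith [hr1Ico.2])
    obtain ⟨s, hsS, hslt⟩ := (csInf_lt_iff hSbdd hSne).1 (by linarith : sInf S < r1 + ε')
    have hsge : r1 ≤ s := csInf_le hSbdd hsS |>.trans (le_refl s) -- r1 = sInf ≤ s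
    have hsIco : s ∈ Ico 0 a.c := by
      constructor
      · linarith [hsS.1.1, hr1mem, h1.1.1]
      · have : s < r1 + ε' := hslt
        have : ε' ≤ a.c - r1 := min_le_right _ _
        linarith
    have : a.gam s ∈ rc.V := by
      refine hball s hsIco ?_
      have h1' : ε' ≤ ε := min_le_left _ _
      rw [abs_sub_lt_iff]
      constructor <;> linarith
    exact hsS.2 ⟨hsIco, this⟩
  have ht1r1 : t1 < r1 := lt_of_le_of_ne hr1mem (fun h => hr1T (h ▸ h1))
  exact ⟨r1, ht1r1, hr1le, hr1T, hIcoT⟩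

/-- Left-stop construction. -/
lemma left_stop {t2 tstar : ℝ} (h1 : t2 ∈ Tset a rc) (h2 : tstar ∉ Tset a rc)
    (hlt : tstar < t2) (hge : 0 ≤ tstar) :
    ∃ l2, tstar ≤ l2 ∧ l2 < t2 ∧ l2 ∉ Tset a rc ∧ Ioc l2 t2 ⊆ Tset a rc := by
  classical
  set S := Icc tstar t2 \ Tset a rc with hS
  have hSne : S.Nonempty := ⟨tstar, ⟨le_rfl, hlt.le⟩, h2⟩
  have hSbdd : BddAbove S := ⟨t2, fun s hs => hs.1.2⟩
  set l2 := sSup S with hl2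
  have hl2ge : tstar ≤ l2 := le_csSup hSbdd ⟨⟨le_rfl, hlt.le⟩, h2⟩
  have hl2le : l2 ≤ t2 := csSup_le hSne (fun s hs => hs.1.2)
  have hIocT : Ioc l2 t2 ⊆ Tset a rc := by
    intro s hs
    by_contra hsT
    have : s ∈ S := ⟨⟨le_trans hl2ge hs.1.le, hs.2⟩, hsT⟩
    exact absurd (le_csSup hSbdd this) (not_le.2 hs.1)
  have hl2T : l2 ∉ Tset a rc := by
    intro hl2T
    have hl2Ico : l2 ∈ Ico 0 a.c := hl2T.1
    obtain ⟨ε, hε, hball⟩ := a.rel_open rc.opn hl2Ico hl2T.2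
    obtain ⟨s, hsS, hslt⟩ := (lt_csSup_iff hSbdd hSne).1 (by linarith : l2 - ε < sSup S)
    have hsle : s ≤ l2 := le_csSup hSbdd hsS
    have hsIco : s ∈ Ico 0 a.c := by
      constructor
      · linarith [hsS.1.1]
      · linarith [hl2Ico.2]
    have : a.gam s ∈ rc.V := by
      refine hball s hsIco ?_
      rw [abs_sub_lt_iff]
      constructor <;> linarith
    exact hsS.2 ⟨hsIco, this⟩
  have hl2lt : l2 < t2 := lt_of_le_of_ne hl2le (fun h => hl2T (h ▸ h1))
  exact ⟨l2, hl2ge, hl2lt, hl2T, hIocT⟩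

/-- At a stopping time, any within-limit of the transition map lies outside the model
interval. -/
lemma endpoint_not_mem_I {P : Set ℝ} (hP : P ⊆ Tset a rc) {e lam : ℝ}
    (he : e ∈ Ico 0 a.c) (heT : a.gam e ∉ rc.V)
    (hne : (𝓝[P] e).NeBot)
    (hconv : Tendsto (sig a rc) (𝓝[P] e) (𝓝 lam)) : lam ∉ rc.I := by
  intro hlam
  have hgam : Tendsto a.gam (𝓝[P] e) (𝓝 (a.gam e)) := by
    have h1 : ContinuousWithinAt a.gam (Ico 0 a.c) e := a.cont e he
    exact h1.tendsto.mono_left (nhdsWithin_mono _ (fun t ht => (hP ht).1))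
  have hinv : Tendsto (fun t => rc.inv (sig a rc t)) (𝓝[P] e) (𝓝 (rc.inv lam)) := by
    have h1 : ContinuousWithinAt rc.inv rc.I lam := rc.cinv' lam hlam
    refine h1.tendsto.comp ?_
    rw [tendsto_nhdsWithin_iff]
    exact ⟨hconv, eventually_nhdsWithin_of_forall (fun t ht => sig_mem_I a rc (hP ht))⟩
  have heq : ∀ t ∈ P, rc.inv (sig a rc t) = a.gam t := by
    intro t ht
    exact rc.linv (hP ht).2
  have hgam2 : Tendsto (fun t => rc.inv (sig a rc t)) (𝓝[P] e) (𝓝 (a.gam e)) := by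
    refine hgam.congr' ?_
    exact eventually_nhdsWithin_of_forall (fun t ht => (heq t ht).symm)
  have : rc.inv lam = a.gam e := tendsto_nhds_unique hinv hgam2
  exact heT (this ▸ rc.inv_mem hlam)

/-- Analysis of the transition map at a stopping endpoint of an interval piece. -/
lemma end_analysis {u v : ℝ} (huv : u < v) (hP : Ioo u v ⊆ Tset a rc) {e : ℝ}
    (he : e = u ∨ e = v) (heI : e ∈ Ico 0 a.c) (heT : e ∉ Tset a rc) :
    ∃ lam, lam ∉ rc.I ∧ lam ∈ closure rc.I ∧
      (((∀ s ∈ Ioo u v, sig a rc s < lam) ∧ ∀ β < lam, ∃ s ∈ Ioo u v, β < sig a rc s) ∨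
       ((∀ s ∈ Ioo u v, lam < sig a rc s) ∧ ∀ β, lam < β → ∃ s ∈ Ioo u v, sig a rc s < β)) := by
  have hgamV : a.gam e ∉ rc.V := fun h => heT ⟨heI, h⟩
  have hcont : ContinuousOn (sig a rc) (Ioo u v) := (sig_contOn a rc).mono hP
  have hinj : InjOn (sig a rc) (Ioo u v) := (sig_injOn a rc).mono hP
  have hne : (Ioo u v).Nonempty := nonempty_Ioo.2 huv
  have hbddA : BddAbove (sig a rc '' Ioo u v) := by
    refine ⟨1, ?_⟩; rintro _ ⟨s, hs, rfl⟩; exact (sig_lt_one a rc (hP hs)).le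
  have hbddB : BddBelow (sig a rc '' Ioo u v) := by
    refine ⟨-1, ?_⟩; rintro _ ⟨s, hs, rfl⟩; exact (neg_one_lt_sig a rc (hP hs)).le
  have hclos : closure (sig a rc '' Ioo u v) ⊆ closure rc.I := by
    apply closure_mono
    rintro _ ⟨s, hs, rfl⟩; exact sig_mem_I a rc (hP hs)
  have hNeBot : (𝓝[Ioo u v] e).NeBot := by
    rcases he with rfl | rfl
    · rw [nhdsWithin_Ioo_eq_nhdsGT huv]; infer_instance
    · rw [nhdsWithin_Ioo_eq_nhdsLT huv]; infer_instance
  have hdir := strictMonoOn_or_strictAntiOn ordConnected_Ioo hcont hinj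
  have sup_case : Tendsto (sig a rc) (𝓝[Ioo u v] e) (𝓝 (sSup (sig a rc '' Ioo u v))) →
      ∃ lam, lam ∉ rc.I ∧ lam ∈ closure rc.I ∧
      (((∀ s ∈ Ioo u v, sig a rc s < lam) ∧ ∀ β < lam, ∃ s ∈ Ioo u v, β < sig a rc s) ∨
       ((∀ s ∈ Ioo u v, lam < sig a rc s) ∧ ∀ β, lam < β → ∃ s ∈ Ioo u v, sig a rc s < β)) := by
    intro htd
    set lam := sSup (sig a rc '' Ioo u v) with hlam
    refine ⟨lam, endpoint_not_mem_I a rc hP heI hgamV hNeBot htd,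
      hclos (csSup_mem_closure (hne.image _) hbddA), Or.inl ⟨?_, ?_⟩⟩
    · intro s hs
      have hle : sig a rc s ≤ lam := le_csSup hbddA (mem_image_of_mem _ hs)
      rcases eq_or_lt_of_le hle with heq | hlt
      · exfalso
        rcases hdir with hm | ha
        · have hs' : (s + v)/2 ∈ Ioo u v := ⟨by linarith [hs.1, hs.2], by linarith [hs.2]⟩
          have h1 := hm hs hs' (by linarith [hs.2])
          have h2 : sig a rc ((s + v)/2) ≤ lam := le_csSup hbddA (mem_image_of_mem _ hs')
          linarith [heq ▸ h1]
        · have hs' : (u + s)/2 ∈ Ioo u v := ⟨by linarith [hs.1], by linarith [hs.1, hs.2]⟩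
          have h1 := ha hs' hs (by linarith [hs.1])
          have h2 : sig a rc ((u + s)/2) ≤ lam := le_csSup hbddA (mem_image_of_mem _ hs')
          linarith [heq ▸ h1]
      · exact hlt
    · intro β hβ
      obtain ⟨y, ⟨s, hs, rfl⟩, hy⟩ := exists_lt_of_lt_csSup (hne.image _) hβ
      exact ⟨s, hs, hy⟩
  have inf_case : Tendsto (sig a rc) (𝓝[Ioo u v] e) (𝓝 (sInf (sig a rc '' Ioo u v))) →
      ∃ lam, lam ∉ rc.I ∧ lam ∈ closure rc.I ∧
      (((∀ s ∈ Ioo u v, sig a rc s < lam) ∧ ∀ β < lam, ∃ s ∈ Ioo u v, β < sig a rc s) ∨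
       ((∀ s ∈ Ioo u v, lam < sig a rc s) ∧ ∀ β, lam < β → ∃ s ∈ Ioo u v, sig a rc s < β)) := by
    intro htd
    set lam := sInf (sig a rc '' Ioo u v) with hlam
    refine ⟨lam, endpoint_not_mem_I a rc hP heI hgamV hNeBot htd,
      hclos (csInf_mem_closure (hne.image _) hbddB), Or.inr ⟨?_, ?_⟩⟩
    · intro s hs
      have hle : lam ≤ sig a rc s := csInf_le hbddB (mem_image_of_mem _ hs)
      rcases eq_or_lt_of_le hle with heq | hlt
      · exfalso
        rcases hdir with hm | ha
        · have hs' : (u + s)/2 ∈ Ioo u v := ⟨by linarith [hs.1], by linarith [hs.1, hs.2]⟩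
          have h1 := hm hs' hs (by linarith [hs.1])
          have h2 : lam ≤ sig a rc ((u + s)/2) := csInf_le hbddB (mem_image_of_mem _ hs')
          linarith [heq ▸ h1]
        · have hs' : (s + v)/2 ∈ Ioo u v := ⟨by linarith [hs.1, hs.2], by linarith [hs.2]⟩
          have h1 := ha hs hs' (by linarith [hs.2])
          have h2 : lam ≤ sig a rc ((s + v)/2) := csInf_le hbddB (mem_image_of_mem _ hs')
          linarith [heq ▸ h1]
      · exact hlt
    · intro β hβ
      obtain ⟨y, ⟨s, hs, rfl⟩, hy⟩ := exists_lt_of_csInf_lt (hne.image _) hβ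
      exact ⟨s, hs, hy⟩
  rcases hdir with hm | ha <;> rcases he with rfl | rfl
  · -- mono, e = u : inf
    refine inf_case ?_
    refine (MonotoneOn.tendsto_nhdsWithin_Ioo_right hne hm.monotoneOn hbddB).mono_left ?_
    exact nhdsWithin_mono _ (fun t ht => ht.1)
  · -- mono, e = v : sup
    refine sup_case ?_
    refine (MonotoneOn.tendsto_nhdsWithin_Ioo_left hne hm.monotoneOn hbddA).mono_left ?_
    exact nhdsWithin_mono _ (fun t ht => ht.2)
  · -- anti, e = u : sup
    refine sup_case ?_
    refine (AntitoneOn.tendsto_nhdsWithin_Ioo_right hne ha.antitoneOn hbddA).mono_left ?_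
    exact nhdsWithin_mono _ (fun t ht => ht.1)
  · -- anti, e = v : inf
    refine inf_case ?_
    refine (AntitoneOn.tendsto_nhdsWithin_Ioo_left hne ha.antitoneOn hbddB).mono_left ?_
    exact nhdsWithin_mono _ (fun t ht => ht.2)

/-- Two disjoint pieces cannot both accumulate from below at a common bound. -/
lemma no_common_acc {f : ℝ → ℝ} {T P1 P2 : Set ℝ} {B : ℝ} (hinj : InjOn f T)
    (h1 : P1 ⊆ T) (h2 : P2 ⊆ T) (hd : Disjoint P1 P2)
    (hne1 : P1.Nonempty) (hne2 : P2.Nonempty) (hoc : (f '' P2).OrdConnected)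
    (hb1 : ∀ s ∈ P1, f s < B) (hb2 : ∀ s ∈ P2, f s < B)
    (hacc1 : ∀ β < B, ∃ s ∈ P1, β < f s) (hacc2 : ∀ β < B, ∃ s ∈ P2, β < f s) : False := by
  obtain ⟨x2, hx2⟩ := hne2
  obtain ⟨s1, hs1, hfs1⟩ := hacc1 (max (f x2) (f x2)) (by simpa using hb2 _ hx2)
  obtain ⟨s2, hs2, hfs2⟩ := hacc2 (max (f x2) (f s1)) (max_lt (hb2 _ hx2) (hb1 _ hs1))
  have hmem : f s1 ∈ f '' P2 := by
    refine hoc.out (mem_image_of_mem _ hx2) (mem_image_of_mem _ hs2) ⟨?_, ?_⟩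
    · exact le_trans (le_max_left _ _) hfs1.le
    · exact le_trans (le_max_right _ _) hfs2.le
  obtain ⟨s2', hs2', he⟩ := hmem
  have : s2' = s1 := hinj (h2 hs2') (h1 hs1) he
  exact (hd.ne_of_mem hs1 hs2') this.symm

/-- End type for half charts: accumulation from below at 1. -/
lemma end_type_half (hh : rc.half = true) {u v : ℝ} (huv : u < v) (hP : Ioo u v ⊆ Tset a rc)
    {e : ℝ} (he : e = u ∨ e = v) (heI : e ∈ Ico 0 a.c) (heT : e ∉ Tset a rc) :
    ∀ β < 1, ∃ s ∈ Ioo u v, β < sig a rc s := by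
  obtain ⟨lam, h1, h2, h3⟩ := end_analysis a rc huv hP he heI heT
  rw [rc.I_subset_Ico hh] at h1 h2
  rw [closure_Ico (by norm_num : (0:ℝ) ≠ 1)] at h2
  have hlam : lam = 1 := by
    by_contra hne
    exact h1 ⟨h2.1, lt_of_le_of_ne h2.2 hne⟩
  rcases h3 with ⟨_, hacc⟩ | ⟨habove, _⟩
  · rwa [hlam] at hacc
  · obtain ⟨s, hs⟩ := nonempty_Ioo.2 huv
    have := habove s hs
    rw [hlam] at this
    exact absurd (sig_lt_one a rc (hP hs)) (not_lt.2 this.le)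

/-- End type for open charts: accumulation from below at 1, or from above at -1. -/
lemma end_type_open (hh : rc.half = false) {u v : ℝ} (huv : u < v) (hP : Ioo u v ⊆ Tset a rc)
    {e : ℝ} (he : e = u ∨ e = v) (heI : e ∈ Ico 0 a.c) (heT : e ∉ Tset a rc) :
    (∀ β < 1, ∃ s ∈ Ioo u v, β < sig a rc s) ∨
      (∀ β, -1 < β → ∃ s ∈ Ioo u v, sig a rc s < β) := by
  obtain ⟨lam, h1, h2, h3⟩ := end_analysis a rc huv hP he heI heT
  rw [rc.I_subset_Ioo hh] at h1 h2
  rw [closure_Ioo (by norm_num : (-1:ℝ) ≠ 1)] at h2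
  have hlam : lam = -1 ∨ lam = 1 := by
    rcases eq_or_lt_of_le h2.1 with hl | hl
    · exact Or.inl hl.symm
    · rcases eq_or_lt_of_le h2.2 with hr | hr
      · exact Or.inr hr
      · exact absurd ⟨hl, hr⟩ h1
  obtain ⟨s0, hs0⟩ := nonempty_Ioo.2 huv
  rcases hlam with rfl | rfl
  · rcases h3 with ⟨hbel, _⟩ | ⟨_, hacc⟩
    · have := hbel s0 hs0
      exact absurd (neg_one_lt_sig a rc (hP hs0)) (not_lt.2 this.le)
    · exact Or.inr (fun β hβ => hacc β hβ)
  · rcases h3 with ⟨_, hacc⟩ | ⟨habove, _⟩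
    · exact Or.inl hacc
    · have := habove s0 hs0
      exact absurd (sig_lt_one a rc (hP hs0)) (not_lt.2 this.le)

/-- The set of chart times of an arc admits no holes. -/
lemma no_hole (hb : b ∈ (𝓡∂ 1).boundary X) {t1 t2 tstar : ℝ}
    (h1 : t1 ∈ Tset a rc) (h2 : t2 ∈ Tset a rc) (hs : tstar ∉ Tset a rc)
    (h12 : t1 < tstar) (h23 : tstar < t2) : False := by
  have ht1I : t1 ∈ Ico 0 a.c := h1.1
  have ht2I : t2 ∈ Ico 0 a.c := h2.1
  have htsI : tstar ∈ Ico 0 a.c := ⟨le_trans ht1I.1 h12.le, lt_trans h23 ht2I.2⟩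
  -- the two pieces adjacent to the hole
  obtain ⟨r1, hr1gt, hr1le, hr1T, hr1sub⟩ := right_stop a rc h1 hs h12 htsI.2.le
  obtain ⟨l2, hl2ge, hl2lt, hl2T, hl2sub⟩ := left_stop a rc h2 hs h23 htsI.1
  have hr1I : r1 ∈ Ico 0 a.c := ⟨le_trans ht1I.1 hr1gt.le, lt_of_le_of_lt hr1le htsI.2⟩
  have hl2I : l2 ∈ Ico 0 a.c := ⟨le_trans htsI.1 hl2ge, lt_trans hl2lt ht2I.2⟩
  have hP1 : Ioo t1 r1 ⊆ Tset a rc := fun s hsx => hr1sub ⟨hsx.1.le, hsx.2⟩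
  have hP2 : Ioo l2 t2 ⊆ Tset a rc := fun s hsx => hl2sub ⟨hsx.1, hsx.2.le⟩
  have hD12 : Disjoint (Ioo t1 r1) (Ioo l2 t2) := by
    rw [Set.disjoint_left]
    intro s hsa hsb
    have : r1 ≤ l2 := le_trans hr1le hl2ge
    linarith [hsa.2, hsb.1]
  -- pairing machinery
  have pairT : ∀ Q1 Q2 : Set ℝ, Q1 ⊆ Tset a rc → Q2 ⊆ Tset a rc → Disjoint Q1 Q2 →
      Q1.Nonempty → Q2.Nonempty → IsPreconnected Q2 →
      (∀ β < 1, ∃ s ∈ Q1, β < sig a rc s) → (∀ β < 1, ∃ s ∈ Q2, β < sig a rc s) → False := by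
    intro Q1 Q2 hQ1 hQ2 hd hn1 hn2 hpc hacc1 hacc2
    refine no_common_acc (sig_injOn a rc) hQ1 hQ2 hd hn1 hn2 ?_
      (fun s hsx => sig_lt_one a rc (hQ1 hsx)) (fun s hsx => sig_lt_one a rc (hQ2 hsx))
      hacc1 hacc2
    exact (hpc.image _ ((sig_contOn a rc).mono hQ2)).ordConnected
  have pairB : ∀ Q1 Q2 : Set ℝ, Q1 ⊆ Tset a rc → Q2 ⊆ Tset a rc → Disjoint Q1 Q2 →
      Q1.Nonempty → Q2.Nonempty → IsPreconnected Q2 →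
      (∀ β, -1 < β → ∃ s ∈ Q1, sig a rc s < β) →
      (∀ β, -1 < β → ∃ s ∈ Q2, sig a rc s < β) → False := by
    intro Q1 Q2 hQ1 hQ2 hd hn1 hn2 hpc hacc1 hacc2
    refine no_common_acc (f := fun s => -(sig a rc s)) (B := 1)
      (fun s hsx t htx h => (sig_injOn a rc) hsx htx (neg_injective h)) hQ1 hQ2 hd hn1 hn2 ?_
      (fun s hsx => by show -(sig a rc s) < 1; linarith [neg_one_lt_sig a rc (hQ1 hsx)])
      (fun s hsx => by show -(sig a rc s) < 1; linarith [neg_one_lt_sig a rc (hQ2 hsx)]) ?_ ?_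
    · exact (hpc.image _ (((sig_contOn a rc).mono hQ2).neg)).ordConnected
    · intro β hβ
      obtain ⟨s, hsx, hlt⟩ := hacc1 (-β) (by linarith)
      exact ⟨s, hsx, by show β < -(sig a rc s); linarith⟩
    · intro β hβ
      obtain ⟨s, hsx, hlt⟩ := hacc2 (-β) (by linarith)
      exact ⟨s, hsx, by show β < -(sig a rc s); linarith⟩
  cases hh : rc.half
  · -- open chart
    have ty1 := end_type_open a rc hh hr1gt hP1 (Or.inr rfl) hr1I hr1T
    have ty2 := end_type_open a rc hh hl2lt hP2 (Or.inl rfl) hl2I hl2T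
    have hne1 : (Ioo t1 r1).Nonempty := nonempty_Ioo.2 hr1gt
    have hne2 : (Ioo l2 t2).Nonempty := nonempty_Ioo.2 hl2lt
    rcases ty1 with ty1 | ty1 <;> rcases ty2 with ty2 | ty2
    case false.inl.inl => exact pairT _ _ hP1 hP2 hD12 hne1 hne2 isPreconnected_Ioo ty1 ty2
    case false.inr.inr => exact pairB _ _ hP1 hP2 hD12 hne1 hne2 isPreconnected_Ioo ty1 ty2
    case false.inl.inr | false.inr.inl =>
      -- mixed case : find a third piece
      have hcT : a.c ∉ Tset a rc := fun h => absurd h.1.2 (lt_irrefl _)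
      obtain ⟨r2, hr2gt, hr2le, hr2T, hr2sub⟩ :=
        right_stop a rc h2 hcT ht2I.2 le_rfl
      rcases lt_or_eq_of_le hr2le with hr2c | hr2c
      · -- third piece to the right of t2
        have hP3 : Ioo t2 r2 ⊆ Tset a rc := fun s hsx => hr2sub ⟨hsx.1.le, hsx.2⟩
        have hr2I : r2 ∈ Ico 0 a.c := ⟨le_trans ht2I.1 hr2gt.le, hr2c⟩
        have ty3 := end_type_open a rc hh hr2gt hP3 (Or.inr rfl) hr2I hr2T
        have hne3 : (Ioo t2 r2).Nonempty := nonempty_Ioo.2 hr2gt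
        have hD13 : Disjoint (Ioo t1 r1) (Ioo t2 r2) := by
          rw [Set.disjoint_left]; intro s hsa hsb
          linarith [hsa.2, hsb.1, hr1le, hl2ge, hl2lt]
        have hD23 : Disjoint (Ioo l2 t2) (Ioo t2 r2) := by
          rw [Set.disjoint_left]; intro s hsa hsb
          linarith [hsa.2, hsb.1]
        rcases ty3 with ty3 | ty3
        · first
          | exact pairT _ _ hP1 hP3 hD13 hne1 hne3 isPreconnected_Ioo ty1 ty3
          | exact pairT _ _ hP2 hP3 hD23 hne2 hne3 isPreconnected_Ioo ty2 ty3
        · first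
          | exact pairB _ _ hP1 hP3 hD13 hne1 hne3 isPreconnected_Ioo ty1 ty3
          | exact pairB _ _ hP2 hP3 hD23 hne2 hne3 isPreconnected_Ioo ty2 ty3
      · -- the arc ends inside the chart; look to the left of t1
        by_cases hex : ∃ s0, s0 ∈ Icc 0 t1 ∧ s0 ∉ Tset a rc
        · obtain ⟨s0, hs0mem, hs0T⟩ := hex
          have hs0lt : s0 < t1 := by
            rcases lt_or_eq_of_le hs0mem.2 with h | h
            · exact h
            · exact absurd (h ▸ h1) hs0T
          obtain ⟨l1, hl1ge, hl1lt, hl1T, hl1sub⟩ := left_stop a rc h1 hs0T hs0lt hs0mem.1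
          have hP0 : Ioo l1 t1 ⊆ Tset a rc := fun s hsx => hl1sub ⟨hsx.1, hsx.2.le⟩
          have hl1I : l1 ∈ Ico 0 a.c := ⟨le_trans hs0mem.1 hl1ge, lt_trans hl1lt ht1I.2⟩
          have ty0 := end_type_open a rc hh hl1lt hP0 (Or.inl rfl) hl1I hl1T
          have hne0 : (Ioo l1 t1).Nonempty := nonempty_Ioo.2 hl1lt
          have hD01 : Disjoint (Ioo l1 t1) (Ioo t1 r1) := by
            rw [Set.disjoint_left]; intro s hsa hsb
            linarith [hsa.2, hsb.1]
          have hD02 : Disjoint (Ioo l1 t1) (Ioo l2 t2) := by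
            rw [Set.disjoint_left]; intro s hsa hsb
            linarith [hsa.2, hsb.1, hr1le, hl2ge]
          rcases ty0 with ty0 | ty0
          · first
            | exact pairT _ _ hP0 hP1 hD01 hne0 hne1 isPreconnected_Ioo ty0 ty1
            | exact pairT _ _ hP0 hP2 hD02 hne0 hne2 isPreconnected_Ioo ty0 ty2
          · first
            | exact pairB _ _ hP0 hP1 hD01 hne0 hne1 isPreconnected_Ioo ty0 ty1
            | exact pairB _ _ hP0 hP2 hD02 hne0 hne2 isPreconnected_Ioo ty0 ty2
        · push_neg at hex
          have h0T : (0:ℝ) ∈ Tset a rc := hex 0 ⟨le_rfl, ht1I.1⟩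
          have hbV : b ∈ rc.V := by
            have := h0T.2
            rwa [a.start] at this
          exact absurd hb (not_bd_of_rc rc hbV (fun h => by rw [h] at hh; exact absurd hh (by simp)))
  · -- half chart
    have ty1 := end_type_half a rc hh hr1gt hP1 (Or.inr rfl) hr1I hr1T
    have ty2 := end_type_half a rc hh hl2lt hP2 (Or.inl rfl) hl2I hl2T
    exact pairT _ _ hP1 hP2 hD12 (nonempty_Ioo.2 hr1gt) (nonempty_Ioo.2 hl2lt)
      isPreconnected_Ioo ty1 ty2

/-- Shape classification for the chart-time set of an arc. -/
lemma Tset_shape (hb : b ∈ (𝓡∂ 1).boundary X) (hne : (Tset a rc).Nonempty) :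
    (∃ p q, 0 ≤ p ∧ p < q ∧ q ≤ a.c ∧ p ∉ Tset a rc ∧ q ∉ Tset a rc ∧ Tset a rc = Ioo p q) ∨
    (∃ q, 0 < q ∧ q ≤ a.c ∧ q ∉ Tset a rc ∧ Tset a rc = Ico 0 q) := by
  classical
  have hTsub := Tset_subset a rc
  have hbddB : BddBelow (Tset a rc) := ⟨0, fun t ht => (hTsub ht).1⟩
  have hbddA : BddAbove (Tset a rc) := ⟨a.c, fun t ht => (hTsub ht).2.le⟩
  set p := sInf (Tset a rc) with hp
  set q := sSup (Tset a rc) with hq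
  have hp0 : 0 ≤ p := le_csInf hne (fun t ht => (hTsub ht).1)
  have hqc : q ≤ a.c := csSup_le hne (fun t ht => (hTsub ht).2.le)
  have hqT : q ∉ Tset a rc := by
    intro hqmem
    have hqI : q ∈ Ico 0 a.c := hTsub hqmem
    obtain ⟨ε, hε, hball⟩ := a.rel_open rc.opn hqI hqmem.2
    set s := min (q + ε/2) ((q + a.c)/2) with hs
    have hs1 : q < s := lt_min (by linarith) (by linarith [hqI.2])
    have hs2 : s ∈ Ico 0 a.c := by
      constructor
      · linarith [hqI.1]
      · calc s ≤ (q + a.c)/2 := min_le_right _ _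
          _ < a.c := by linarith [hqI.2]
    have hs3 : |s - q| < ε := by
      rw [abs_sub_lt_iff]
      constructor
      · have : s ≤ q + ε/2 := min_le_left _ _
        linarith
      · linarith
    have : s ∈ Tset a rc := ⟨hs2, hball s hs2 hs3⟩
    exact absurd (le_csSup hbddA this) (not_le.2 hs1)
  have hpmem0 : p ∈ Tset a rc → p = 0 := by
    intro hpmem
    by_contra hne0
    have hppos : 0 < p := lt_of_le_of_ne hp0 (Ne.symm hne0)
    have hpI : p ∈ Ico 0 a.c := hTsub hpmem
    obtain ⟨ε, hε, hball⟩ := a.rel_open rc.opn hpI hpmem.2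
    set s := max (p - ε/2) (p/2) with hs
    have hs1 : s < p := max_lt (by linarith) (by linarith)
    have hs2 : s ∈ Ico 0 a.c := by
      constructor
      · calc (0:ℝ) ≤ p/2 := by linarith
          _ ≤ s := le_max_right _ _
      · linarith [hpI.2]
    have hs3 : |s - p| < ε := by
      rw [abs_sub_lt_iff]
      constructor
      · linarith
      · have : p - ε/2 ≤ s := le_max_left _ _
        linarith
    have : s ∈ Tset a rc := ⟨hs2, hball s hs2 hs3⟩
    exact absurd (csInf_le hbddB this) (not_le.2 hs1)
  have hIoo : Ioo p q ⊆ Tset a rc := by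
    intro s hsx
    by_contra hsT
    obtain ⟨t1, ht1, ht1lt⟩ := (csInf_lt_iff hbddB hne).1 hsx.1
    obtain ⟨t2, ht2, ht2gt⟩ := (lt_csSup_iff hbddA hne).1 hsx.2
    exact no_hole a rc hb ht1 ht2 hsT ht1lt ht2gt
  by_cases hpmem : p ∈ Tset a rc
  · right
    have hp00 : p = 0 := hpmem0 hpmem
    have hq0 : 0 < q := by
      have h1 : p ≤ q := le_trans (csInf_le hbddB hpmem) (le_csSup hbddA hpmem)
      rw [hp00] at h1
      rcases lt_or_eq_of_le h1 with h | h
      · exact h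
      · exfalso; apply hqT; rw [← h, ← hp00]; exact hpmem
    refine ⟨q, hq0, hqc, hqT, ?_⟩
    apply Subset.antisymm
    · intro t ht
      have h1 : t ≤ q := le_csSup hbddA ht
      have h2 : t ≠ q := fun h => hqT (h ▸ ht)
      exact ⟨(hTsub ht).1, lt_of_le_of_ne h1 h2⟩
    · intro t ht
      rcases eq_or_lt_of_le ht.1 with h | h
      · rw [← h]
        rw [hp00] at hpmem
        exact hpmem
      · refine hIoo ⟨?_, ht.2⟩
        rw [hp00]
        exact h
  · left
    obtain ⟨t0, ht0⟩ := hne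
    have hpt0 : p < t0 := by
      rcases lt_or_eq_of_le (csInf_le hbddB ht0) with h | h
      · exact h
      · exfalso; apply hpmem; rw [hp, h]; exact ht0
    have hpq : p < q := lt_of_lt_of_le hpt0 (le_csSup hbddA ht0)
    refine ⟨p, q, hp0, hpq, hqc, hpmem, hqT, ?_⟩
    apply Subset.antisymm
    · intro t ht
      have h1 : t ≤ q := le_csSup hbddA ht
      have h2 : t ≠ q := fun h => hqT (h ▸ ht)
      have h3 : p ≤ t := csInf_le hbddB ht
      have h4 : p ≠ t := fun h => hpmem (h ▸ ht)
      exact ⟨lt_of_le_of_ne h3 h4, lt_of_le_of_ne h1 h2⟩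
    · exact hIoo

/-- The pairing property: `b` has exactly one partner boundary point in its
connected component. -/
def Pairing {X : Type*} [TopologicalSpace X] [ChartedSpace Hs X] (b : X) : Prop :=
  ∃ w, w ∈ (𝓡∂ 1).boundary X ∧ w ≠ b ∧ w ∈ connectedComponent b ∧
    ∀ y, y ∈ (𝓡∂ 1).boundary X → y ∈ connectedComponent b → y = b ∨ y = w

/-- A half chart whose zero point is `b` gives an arc. -/
def arcOfChart (rc : RC X) (hh : rc.half = true) (hbV : b ∈ rc.V) (h0 : rc.psi b = 0) :
    Arc X b where
  c := 1
  pos := one_pos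
  gam := rc.inv
  ginv := rc.psi
  start := by rw [← h0, rc.linv hbV]
  cont := by
    have := rc.cinv'
    rwa [rc.I_subset_Ico hh] at this
  opn := by
    have h1 : rc.inv '' Ico 0 1 = rc.V := by
      rw [← rc.inv_img, rc.I_subset_Ico hh]
    rw [h1]; exact rc.opn
  linv := by
    intro t ht
    refine rc.rinv ?_
    rwa [rc.I_subset_Ico hh]
  cinv := by
    have h1 : rc.inv '' Ico 0 1 = rc.V := by
      rw [← rc.inv_img, rc.I_subset_Ico hh]
    rw [h1]; exact rc.cont

lemma arcOfChart_U (rc : RC X) (hh : rc.half = true) (hbV : b ∈ rc.V) (h0 : rc.psi b = 0) :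
    (arcOfChart rc hh hbV h0).U = rc.V := by
  show rc.inv '' Ico 0 1 = rc.V
  rw [← rc.inv_img, rc.I_subset_Ico hh]

/-- If the transition image covers the whole model interval, the chart is inside the arc. -/
lemma V_subset_of_image (himg : rc.I ⊆ sig a rc '' Tset a rc) : rc.V ⊆ a.U := by
  intro v hv
  obtain ⟨s, hsT, hse⟩ := himg (rc.mem_I hv)
  have h1 : v = a.gam s := rc.injOn hv hsT.2 hse.symm
  rw [h1]
  exact a.mem_U hsT.1

/-- On a tail, the transition map cannot be increasing for a half chart. -/
lemma tail_mono_false (hh : rc.half = true) {p : ℝ} (hsub : Ioo p a.c ⊆ Tset a rc)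
    (hp0 : 0 ≤ p) (hpc : p < a.c) (hpT : p ∉ Tset a rc)
    (hmono : StrictMonoOn (sig a rc) (Ioo p a.c)) : False := by
  have hne : (Ioo p a.c).Nonempty := nonempty_Ioo.2 hpc
  have hbddB : BddBelow (sig a rc '' Ioo p a.c) := by
    refine ⟨-1, ?_⟩; rintro _ ⟨s, hs, rfl⟩; exact (neg_one_lt_sig a rc (hsub hs)).le
  have hNeBot : (𝓝[Ioo p a.c] p).NeBot := by
    rw [nhdsWithin_Ioo_eq_nhdsGT hpc]; infer_instance
  have htd : Tendsto (sig a rc) (𝓝[Ioo p a.c] p) (𝓝 (sInf (sig a rc '' Ioo p a.c))) :=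
    (MonotoneOn.tendsto_nhdsWithin_Ioo_right hne hmono.monotoneOn hbddB).mono_left
      (nhdsWithin_mono _ (fun t ht => ht.1))
  have hnotI := endpoint_not_mem_I a rc hsub ⟨hp0, hpc⟩
    (fun h => hpT ⟨⟨hp0, hpc⟩, h⟩) hNeBot htd
  have hcl : sInf (sig a rc '' Ioo p a.c) ∈ closure rc.I := by
    refine closure_mono ?_ (csInf_mem_closure (hne.image _) hbddB)
    rintro _ ⟨s, hs, rfl⟩; exact sig_mem_I a rc (hsub hs)
  rw [rc.I_subset_Ico hh] at hnotI hcl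
  rw [closure_Ico (by norm_num : (0:ℝ) ≠ 1)] at hcl
  have hlam : sInf (sig a rc '' Ioo p a.c) = 1 := by
    by_contra hnel
    exact hnotI ⟨hcl.1, lt_of_le_of_ne hcl.2 hnel⟩
  obtain ⟨s0, hs0⟩ := hne
  have h1 : sInf (sig a rc '' Ioo p a.c) ≤ sig a rc s0 := csInf_le hbddB (mem_image_of_mem _ hs0)
  have h2 := sig_lt_one a rc (hsub hs0)
  rw [hlam] at h1
  linarith

/-- The glued curve extending an arc into a chart. -/
def glueFun (a : Arc X b) (rc : RC X) (l : ℝ) : ℝ → X :=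
  fun t => if t < a.c then a.gam t else rc.inv (l - (t - a.c))

lemma glueFun_left {l t : ℝ} (ht : t < a.c) : glueFun a rc l t = a.gam t := if_pos ht

lemma glueFun_right {l t : ℝ} (ht : a.c ≤ t) : glueFun a rc l t = rc.inv (l - (t - a.c)) :=
  if_neg (not_lt.2 ht)

lemma glue_cont {d l : ℝ} (hcd : a.c ≤ d)
    (harg : ∀ t, a.c ≤ t → t ≤ d → l - (t - a.c) ∈ rc.I)
    (hten : Tendsto a.gam (𝓝[Ico 0 a.c] a.c) (𝓝 (rc.inv l))) :
    ContinuousOn (glueFun a rc l) (Icc 0 d) := by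
  have hcont2 : ContinuousOn (fun t => rc.inv (l - (t - a.c))) (Icc a.c d) := by
    refine rc.cinv'.comp
      ((continuous_const.sub (continuous_id.sub continuous_const)).continuousOn) ?_
    intro t ht; exact harg t ht.1 ht.2
  have heq2 : EqOn (glueFun a rc l) (fun t => rc.inv (l - (t - a.c))) (Icc a.c d) :=
    fun t ht => glueFun_right a rc ht.1
  have hval : glueFun a rc l a.c = rc.inv l := by
    rw [glueFun_right a rc le_rfl, sub_self, sub_zero]
  intro t ht
  rcases lt_trichotomy t a.c with htc | htc | htc
  · have h1 : ContinuousWithinAt a.gam (Ico 0 a.c) t := a.cont t ⟨ht.1, htc⟩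
    have h2 : ContinuousWithinAt (glueFun a rc l) (Ico 0 a.c) t :=
      h1.congr (fun s hs => glueFun_left a rc hs.2) (glueFun_left a rc htc)
    refine h2.mono_of_mem_nhdsWithin ?_
    refine mem_nhdsWithin.2 ⟨Iio a.c, isOpen_Iio, htc, ?_⟩
    rintro s ⟨hs1, hs2⟩
    exact ⟨hs2.1, hs1⟩
  · subst htc
    have hleft : ContinuousWithinAt (glueFun a rc l) (Icc 0 d ∩ Iio a.c) a.c := by
      show Tendsto (glueFun a rc l) (𝓝[Icc 0 d ∩ Iio a.c] a.c) (𝓝 (glueFun a rc l a.c))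
      rw [hval]
      refine Tendsto.congr' ?_ (hten.mono_left (nhdsWithin_mono _ ?_))
      · exact eventually_nhdsWithin_of_forall (fun s hs => (glueFun_left a rc hs.2).symm)
      · rintro s ⟨hs1, hs2⟩
        exact ⟨hs1.1, hs2⟩
    have hright : ContinuousWithinAt (glueFun a rc l) (Icc 0 d ∩ Ici a.c) a.c := by
      have h3 : Icc 0 d ∩ Ici a.c ⊆ Icc a.c d := fun s hs => ⟨hs.2, hs.1.2⟩
      have h4 : ContinuousWithinAt (glueFun a rc l) (Icc a.c d) a.c :=
        (hcont2 a.c ⟨le_rfl, hcd⟩).congr heq2 (heq2 ⟨le_rfl, hcd⟩)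
      exact h4.mono h3
    refine (hleft.union hright).mono ?_
    intro s hs
    rcases lt_or_ge s a.c with h | h
    · exact Or.inl ⟨hs, h⟩
    · exact Or.inr ⟨hs, h⟩
  · have h4 : ContinuousWithinAt (glueFun a rc l) (Icc a.c d) t :=
      (hcont2 t ⟨htc.le, ht.2⟩).congr heq2 (heq2 ⟨htc.le, ht.2⟩)
    have h5 : Icc a.c d ∈ 𝓝[Icc 0 d] t := by
      refine mem_nhdsWithin.2 ⟨Ioi a.c, isOpen_Ioi, htc, ?_⟩
      rintro s ⟨hs1, hs2⟩
      exact ⟨(hs1 : a.c < s).le, hs2.2⟩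
    exact h4.mono_of_mem_nhdsWithin h5

lemma glue_inj {d l : ℝ} (harg : ∀ t, a.c ≤ t → t ≤ d → l - (t - a.c) ∈ rc.I)
    (hdis : ∀ s, a.c ≤ s → s ≤ d → rc.inv (l - (s - a.c)) ∉ a.U) :
    InjOn (glueFun a rc l) (Icc 0 d) := by
  intro t1 h1 t2 h2 he
  rcases lt_or_ge t1 a.c with hc1 | hc1 <;> rcases lt_or_ge t2 a.c with hc2 | hc2
  · rw [glueFun_left a rc hc1, glueFun_left a rc hc2] at he
    exact a.injOn ⟨h1.1, hc1⟩ ⟨h2.1, hc2⟩ he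
  · rw [glueFun_left a rc hc1, glueFun_right a rc hc2] at he
    exact absurd (he ▸ a.mem_U ⟨h1.1, hc1⟩) (hdis t2 hc2 h2.2)
  · rw [glueFun_right a rc hc1, glueFun_left a rc hc2] at he
    exact absurd (he.symm ▸ a.mem_U ⟨h2.1, hc2⟩) (hdis t1 hc1 h1.2)
  · rw [glueFun_right a rc hc1, glueFun_right a rc hc2] at he
    have := rc.inv_injOn (harg t1 hc1 h1.2) (harg t2 hc2 h2.2) he
    linarith

/-- Common setup for the tail case with an antitone transition map. Computes the image of
the transition map and the limit of the arc at its end. -/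
lemma tail_pack {p : ℝ} (hp0 : 0 ≤ p) (hpc : p < a.c) (hT : Tset a rc = Ioo p a.c)
    (hanti : StrictAntiOn (sig a rc) (Ioo p a.c)) :
    ∃ l Lam, Lam ∉ rc.I ∧ Lam ∈ closure rc.I ∧ l < Lam ∧
      sig a rc '' Ioo p a.c = Ioo l Lam ∧ (∀ y ∈ Ioo p a.c, sig a rc y ∈ Ioo l Lam) ∧
      (l ∈ rc.I → Tendsto a.gam (𝓝[Ico 0 a.c] a.c) (𝓝 (rc.inv l))) := by
  have hsub : Ioo p a.c ⊆ Tset a rc := by rw [hT]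
  have hpT : p ∉ Tset a rc := by rw [hT]; exact fun h => lt_irrefl p h.1
  have hne : (Ioo p a.c).Nonempty := nonempty_Ioo.2 hpc
  have hbddB : BddBelow (sig a rc '' Ioo p a.c) := by
    refine ⟨-1, ?_⟩; rintro _ ⟨s, hs, rfl⟩; exact (neg_one_lt_sig a rc (hsub hs)).le
  have hbddA : BddAbove (sig a rc '' Ioo p a.c) := by
    refine ⟨1, ?_⟩; rintro _ ⟨s, hs, rfl⟩; exact (sig_lt_one a rc (hsub hs)).le
  set l := sInf (sig a rc '' Ioo p a.c) with hl
  set Lam := sSup (sig a rc '' Ioo p a.c) with hLam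
  have hNeBot : (𝓝[Ioo p a.c] p).NeBot := by
    rw [nhdsWithin_Ioo_eq_nhdsGT hpc]; infer_instance
  have htdp : Tendsto (sig a rc) (𝓝[Ioo p a.c] p) (𝓝 Lam) :=
    (AntitoneOn.tendsto_nhdsWithin_Ioo_right hne hanti.antitoneOn hbddA).mono_left
      (nhdsWithin_mono _ (fun t ht => ht.1))
  have hLamI : Lam ∉ rc.I := endpoint_not_mem_I a rc hsub ⟨hp0, hpc⟩
    (fun h => hpT ⟨⟨hp0, hpc⟩, h⟩) hNeBot htdp
  have hLamcl : Lam ∈ closure rc.I := by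
    refine closure_mono ?_ (csSup_mem_closure (hne.image _) hbddA)
    rintro _ ⟨s, hs, rfl⟩; exact sig_mem_I a rc (hsub hs)
  -- strict bounds
  have hstrictl : ∀ y ∈ Ioo p a.c, l < sig a rc y := by
    intro y hy
    have h1 : l ≤ sig a rc y := csInf_le hbddB (mem_image_of_mem _ hy)
    rcases eq_or_lt_of_le h1 with h | h
    · exfalso
      have hy' : (y + a.c)/2 ∈ Ioo p a.c := ⟨by linarith [hy.1, hy.2], by linarith [hy.2]⟩
      have h2 := hanti hy hy' (by linarith [hy.2])
      have h3 : l ≤ sig a rc ((y + a.c)/2) := csInf_le hbddB (mem_image_of_mem _ hy')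
      linarith [h ▸ h2]
    · exact h
  have hstrictL : ∀ y ∈ Ioo p a.c, sig a rc y < Lam := by
    intro y hy
    have h1 : sig a rc y ≤ Lam := le_csSup hbddA (mem_image_of_mem _ hy)
    rcases eq_or_lt_of_le h1 with h | h
    · exfalso
      have hy' : (p + y)/2 ∈ Ioo p a.c := ⟨by linarith [hy.1], by linarith [hy.1, hy.2]⟩
      have h2 := hanti hy' hy (by linarith [hy.1])
      have h3 : sig a rc ((p + y)/2) ≤ Lam := le_csSup hbddA (mem_image_of_mem _ hy')
      linarith [h ▸ h2]
    · exact h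
  have hlLam : l < Lam := by
    obtain ⟨s0, hs0⟩ := hne
    exact lt_trans (hstrictl s0 hs0) (hstrictL s0 hs0)
  have himg : sig a rc '' Ioo p a.c = Ioo l Lam := by
    apply Subset.antisymm
    · rintro _ ⟨s, hs, rfl⟩
      exact ⟨hstrictl s hs, hstrictL s hs⟩
    · intro y hy
      have hoc : (sig a rc '' Ioo p a.c).OrdConnected :=
        (isPreconnected_Ioo.image _ ((sig_contOn a rc).mono hsub)).ordConnected
      obtain ⟨y1, hy1, hy1lt⟩ := (csInf_lt_iff hbddB (hne.image _)).1 hy.1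
      obtain ⟨y2, hy2, hy2gt⟩ := (lt_csSup_iff hbddA (hne.image _)).1 hy.2
      exact hoc.out hy1 hy2 ⟨hy1lt.le, hy2gt.le⟩
  refine ⟨l, Lam, hLamI, hLamcl, hlLam, himg, fun y hy => ⟨hstrictl y hy, hstrictL y hy⟩, ?_⟩
  intro hlI
  -- tendsto of the arc at its end
  have htdc : Tendsto (sig a rc) (𝓝[Ioo p a.c] a.c) (𝓝 l) :=
    (AntitoneOn.tendsto_nhdsWithin_Ioo_left hne hanti.antitoneOn hbddB).mono_left
      (nhdsWithin_mono _ (fun t ht => ht.2))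
  have hinv : Tendsto (fun t => rc.inv (sig a rc t)) (𝓝[Ioo p a.c] a.c) (𝓝 (rc.inv l)) := by
    have h1 : ContinuousWithinAt rc.inv rc.I l := rc.cinv' l hlI
    refine h1.tendsto.comp ?_
    rw [tendsto_nhdsWithin_iff]
    exact ⟨htdc, eventually_nhdsWithin_of_forall (fun t ht => sig_mem_I a rc (hsub ht))⟩
  have heq : Tendsto a.gam (𝓝[Ioo p a.c] a.c) (𝓝 (rc.inv l)) := by
    refine hinv.congr' ?_
    exact eventually_nhdsWithin_of_forall (fun t ht => rc.linv (hsub ht).2)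
  have hfilter : 𝓝[Ico 0 a.c] a.c = 𝓝[Ioo p a.c] a.c := by
    rw [nhdsWithin_restrict' (Ico 0 a.c) (Ioi_mem_nhds hpc)]
    congr 1
    ext x
    constructor
    · rintro ⟨⟨h1, h2⟩, h3⟩; exact ⟨h3, h2⟩
    · rintro ⟨h1, h2⟩; exact ⟨⟨le_trans hp0 h1.le, h2⟩, h1⟩
  rw [hfilter]
  exact heq

/-- The terminal case: the arc runs into a half chart, closing up the component. -/
lemma terminal_pairing (hb : b ∈ (𝓡∂ 1).boundary X) (hh : rc.half = true) {p : ℝ}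
    (hp0 : 0 ≤ p) (hpc : p < a.c) (hT : Tset a rc = Ioo p a.c)
    (hanti : StrictAntiOn (sig a rc) (Ioo p a.c)) : Pairing b := by
  obtain ⟨l, Lam, hLamI, hLamcl, hlLam, himg, hbounds, hten⟩ := tail_pack a rc hp0 hpc hT hanti
  have hsub : Ioo p a.c ⊆ Tset a rc := by rw [hT]
  have hne : (Ioo p a.c).Nonempty := nonempty_Ioo.2 hpc
  rw [rc.I_subset_Ico hh] at hLamI hLamcl
  rw [closure_Ico (by norm_num : (0:ℝ) ≠ 1)] at hLamcl
  have hLam1 : Lam = 1 := by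
    by_contra hnel
    exact hLamI ⟨hLamcl.1, lt_of_le_of_ne hLamcl.2 hnel⟩
  have hvals : ∀ y ∈ Ioo l Lam, (0:ℝ) ≤ y := by
    intro y hy
    rw [← himg] at hy
    obtain ⟨s, hs, rfl⟩ := hy
    have := sig_mem_I a rc (hsub hs)
    rw [rc.I_subset_Ico hh] at this
    exact this.1
  have hl0 : 0 ≤ l := by
    by_contra hneg
    push_neg at hneg
    set y := (l + min 0 Lam)/2 with hy
    have h1 : l < min 0 Lam := lt_min hneg hlLam
    have h2 : y ∈ Ioo l Lam := by
      refine ⟨by rw [hy]; linarith, ?_⟩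
      rw [hy]
      have := min_le_right 0 Lam
      linarith
    have h3 : y < 0 := by
      rw [hy]
      have := min_le_left 0 Lam
      linarith
    linarith [hvals y h2]
  have hl1 : l < 1 := hLam1 ▸ hlLam
  have hlI : l ∈ rc.I := by rw [rc.I_subset_Ico hh]; exact ⟨hl0, hl1⟩
  -- key membership relation between the chart and the arc
  have hUV : ∀ v, v ∈ rc.V → (v ∈ a.U ↔ rc.psi v ∈ Ioo l Lam) := by
    intro v hv
    constructor
    · rintro ⟨t, ht, rfl⟩
      have htT : t ∈ Tset a rc := ⟨ht, hv⟩
      rw [hT] at htT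
      exact himg ▸ mem_image_of_mem _ htT
    · intro hpsi
      rw [← himg] at hpsi
      obtain ⟨s, hs, hse⟩ := hpsi
      have h1 : v = a.gam s := rc.injOn hv (hsub hs).2 hse.symm
      rw [h1]
      exact a.mem_U (hsub hs).1
  set d := a.c + l with hd
  have hcd : a.c ≤ d := by rw [hd]; linarith
  have harg : ∀ t, a.c ≤ t → t ≤ d → l - (t - a.c) ∈ rc.I := by
    intro t h1 h2
    rw [rc.I_subset_Ico hh]
    constructor
    · rw [hd] at h2; linarith
    · linarith [hl1]
  have hdis : ∀ s, a.c ≤ s → s ≤ d → rc.inv (l - (s - a.c)) ∉ a.U := by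
    intro s h1 h2 hmem
    have hinvV : rc.inv (l - (s - a.c)) ∈ rc.V := rc.inv_mem (harg s h1 h2)
    have := (hUV _ hinvV).1 hmem
    rw [rc.rinv (harg s h1 h2)] at this
    linarith [this.1]
  have hΓcont := glue_cont a rc hcd harg (hten hlI)
  have hΓinj := glue_inj a rc harg hdis
  set K := glueFun a rc l '' Icc 0 d with hK
  have hKimg : K = a.U ∪ rc.inv '' Icc 0 l := by
    rw [hK]
    apply Subset.antisymm
    · rintro _ ⟨t, ht, rfl⟩
      rcases lt_or_ge t a.c with h | h
      · left; rw [glueFun_left a rc h]; exact a.mem_U ⟨ht.1, h⟩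
      · right
        rw [glueFun_right a rc h]
        refine mem_image_of_mem _ ⟨?_, ?_⟩
        · rw [hd] at ht; linarith [ht.2]
        · linarith
    · rintro x (⟨t, ht, rfl⟩ | ⟨y, hy, rfl⟩)
      · exact ⟨t, ⟨ht.1, le_trans ht.2.le hcd⟩, glueFun_left a rc ht.2⟩
      · refine ⟨a.c + (l - y), ⟨by linarith [a.pos, hy.1, hy.2], by rw [hd]; linarith [hy.1]⟩, ?_⟩
        rw [glueFun_right a rc (by linarith [hy.2])]
        congr 1
        ring
  have hKUV : K = a.U ∪ rc.V := by
    rw [hKimg]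
    apply Subset.antisymm
    · rintro x (hx | ⟨y, hy, rfl⟩)
      · exact Or.inl hx
      · refine Or.inr (rc.inv_mem ?_)
        rw [rc.I_subset_Ico hh]
        exact ⟨hy.1, lt_of_le_of_lt hy.2 hl1⟩
    · rintro x (hx | hx)
      · exact Or.inl hx
      · by_cases hxU : x ∈ a.U
        · exact Or.inl hxU
        · right
          have h1 : rc.psi x ∈ rc.I := rc.mem_I hx
          have h2 : rc.psi x ∉ Ioo l Lam := fun h => hxU ((hUV x hx).2 h)
          rw [rc.I_subset_Ico hh] at h1
          have h3 : rc.psi x ≤ l := by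
            by_contra h4
            exact h2 ⟨not_le.1 h4, hLam1 ▸ h1.2⟩
          exact ⟨rc.psi x, ⟨h1.1, h3⟩, rc.linv hx⟩
  have hKopen : IsOpen K := by rw [hKUV]; exact a.opn.union rc.opn
  have hKcompact : IsCompact K := isCompact_Icc.image_of_continuousOn hΓcont
  have hKconn : IsPreconnected K := isPreconnected_Icc.image _ hΓcont
  have hbK : b ∈ K := by
    refine ⟨0, ⟨le_rfl, by linarith [a.pos]⟩, ?_⟩
    rw [glueFun_left a rc a.pos]
    exact a.start
  have hKcc : K = connectedComponent b :=
    Subset.antisymm (hKconn.subset_connectedComponent hbK)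
      (IsClopen.connectedComponent_subset ⟨hKcompact.isClosed, hKopen⟩ hbK)
  set w := rc.inv 0 with hw
  have h0I : (0:ℝ) ∈ rc.I := by rw [rc.I_subset_Ico hh]; exact ⟨le_rfl, one_pos⟩
  have hwd : glueFun a rc l d = w := by
    rw [glueFun_right a rc hcd, hw, hd]
    congr 1
    ring
  have hwK : w ∈ K := ⟨d, ⟨by linarith [a.pos], le_rfl⟩, hwd⟩
  have hwbd : w ∈ (𝓡∂ 1).boundary X :=
    mem_bd_of_half_zero rc hh (rc.inv_mem h0I) (rc.rinv h0I)
  have hbΓ : glueFun a rc l 0 = b := by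
    rw [glueFun_left a rc a.pos]; exact a.start
  have hwb : w ≠ b := by
    intro hcontra
    have h1 : glueFun a rc l d = glueFun a rc l 0 := by rw [hwd, hbΓ, hcontra]
    have h2 : d = 0 := hΓinj ⟨by linarith [a.pos], le_rfl⟩ ⟨le_rfl, by linarith [a.pos]⟩ h1
    have : (0:ℝ) < d := by rw [hd]; linarith [a.pos]
    linarith
  refine ⟨w, hwbd, hwb, by rw [← hKcc]; exact hwK, ?_⟩
  intro y hybd hycc
  have hyK : y ∈ K := by rw [hKcc]; exact hycc
  obtain ⟨s, hs, rfl⟩ := hyK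
  by_contra hcon
  push_neg at hcon
  obtain ⟨hyb, hyw⟩ := hcon
  have hs0 : s ≠ 0 := fun h => hyb (by rw [h, hbΓ])
  have hsd : s ≠ d := fun h => hyw (by rw [h, hwd])
  have hsIoo : s ∈ Ioo 0 d := ⟨lt_of_le_of_ne hs.1 (Ne.symm hs0), lt_of_le_of_ne hs.2 hsd⟩
  set δ := min s (d - s) with hδ
  have hδpos : 0 < δ := lt_min hsIoo.1 (by linarith [hsIoo.2])
  have hsubδ : Ioo (s - δ) (s + δ) ⊆ Icc 0 d := by
    intro t ht
    constructor
    · have : δ ≤ s := min_le_left _ _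
      linarith [ht.1]
    · have : δ ≤ d - s := min_le_right _ _
      linarith [ht.2]
  exact absurd hybd (not_bd_of_param hδpos (hΓcont.mono hsubδ) (hΓinj.mono hsubδ) rfl)

/-- The extension case: the arc runs into an open chart and can be extended. -/
lemma extension_arc (hh : rc.half = false) {p : ℝ} (hp0 : 0 ≤ p) (hpc : p < a.c)
    (hT : Tset a rc = Ioo p a.c) (hanti : StrictAntiOn (sig a rc) (Ioo p a.c)) :
    rc.V ⊆ a.U ∨ ∃ a' : Arc X b, a.U ∪ rc.V ⊆ a'.U := by
  classical
  obtain ⟨l, Lam, hLamI, hLamcl, hlLam, himg, hbounds, hten⟩ := tail_pack a rc hp0 hpc hT hanti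
  have hsub : Ioo p a.c ⊆ Tset a rc := by rw [hT]
  have hne : (Ioo p a.c).Nonempty := nonempty_Ioo.2 hpc
  rw [rc.I_subset_Ioo hh] at hLamI hLamcl
  rw [closure_Ioo (by norm_num : (-1:ℝ) ≠ 1)] at hLamcl
  have hLam1 : Lam = 1 := by
    rcases eq_or_lt_of_le hLamcl.2 with h | h
    · exact h
    · exfalso
      rcases eq_or_lt_of_le hLamcl.1 with h2 | h2
      · obtain ⟨s0, hs0⟩ := hne
        have := (hbounds s0 hs0).2
        have h3 := neg_one_lt_sig a rc (hsub hs0)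
        rw [← h2] at this
        linarith
      · exact hLamI ⟨h2, h⟩
  have hvals : ∀ y ∈ Ioo l Lam, (-1:ℝ) < y := by
    intro y hy
    rw [← himg] at hy
    obtain ⟨s, hs, rfl⟩ := hy
    exact neg_one_lt_sig a rc (hsub hs)
  have hlm1 : -1 ≤ l := by
    by_contra hneg
    push_neg at hneg
    set y := (l + min (-1) Lam)/2 with hy
    have h1 : l < min (-1) Lam := lt_min hneg hlLam
    have h2 : y ∈ Ioo l Lam := by
      refine ⟨by rw [hy]; linarith, ?_⟩
      rw [hy]
      have := min_le_right (-1:ℝ) Lam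
      linarith
    have h3 : y < -1 := by
      rw [hy]
      have := min_le_left (-1:ℝ) Lam
      linarith
    linarith [hvals y h2]
  rcases eq_or_lt_of_le hlm1 with hlm | hlm
  · -- the chart is contained in the arc
    left
    refine V_subset_of_image a rc ?_
    rw [rc.I_subset_Ioo hh, hT, himg, ← hlm, hLam1]
  · -- extension
    right
    have hl1 : l < 1 := hLam1 ▸ hlLam
    have hlI : l ∈ rc.I := by rw [rc.I_subset_Ioo hh]; exact ⟨hlm, hl1⟩
    have hUV : ∀ v, v ∈ rc.V → (v ∈ a.U ↔ rc.psi v ∈ Ioo l Lam) := by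
      intro v hv
      constructor
      · rintro ⟨t, ht, rfl⟩
        have htT : t ∈ Tset a rc := ⟨ht, hv⟩
        rw [hT] at htT
        exact himg ▸ mem_image_of_mem _ htT
      · intro hpsi
        rw [← himg] at hpsi
        obtain ⟨s, hs, hse⟩ := hpsi
        have h1 : v = a.gam s := rc.injOn hv (hsub hs).2 hse.symm
        rw [h1]
        exact a.mem_U (hsub hs).1
    set c' := a.c + (l + 1) with hc'
    have hcc' : a.c < c' := by rw [hc']; linarith
    have harg : ∀ t, a.c ≤ t → t < c' → l - (t - a.c) ∈ rc.I := by
      intro t h1 h2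
      rw [rc.I_subset_Ioo hh]
      rw [hc'] at h2
      constructor
      · linarith
      · linarith [hl1]
    have hdis : ∀ s, a.c ≤ s → s < c' → rc.inv (l - (s - a.c)) ∉ a.U := by
      intro s h1 h2 hmem
      have hinvV : rc.inv (l - (s - a.c)) ∈ rc.V := rc.inv_mem (harg s h1 h2)
      have := (hUV _ hinvV).1 hmem
      rw [rc.rinv (harg s h1 h2)] at this
      linarith [this.1]
    -- continuity on `Ico 0 c'`
    have hcont' : ContinuousOn (glueFun a rc l) (Ico 0 c') := by
      intro t ht
      set d := max ((t + c')/2) a.c with hd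
      have htd : t < d := lt_of_lt_of_le (by linarith [ht.2]) (le_max_left _ _)
      have hdc' : d < c' := max_lt (by linarith [ht.2]) hcc'
      have hcd : a.c ≤ d := le_max_right _ _
      have hargd : ∀ s, a.c ≤ s → s ≤ d → l - (s - a.c) ∈ rc.I :=
        fun s h1 h2 => harg s h1 (lt_of_le_of_lt h2 hdc')
      have hC := glue_cont a rc hcd hargd (hten hlI)
      have h1 : ContinuousWithinAt (glueFun a rc l) (Icc 0 d) t := hC t ⟨ht.1, htd.le⟩
      refine h1.mono_of_mem_nhdsWithin ?_
      refine mem_nhdsWithin.2 ⟨Iio d, isOpen_Iio, htd, ?_⟩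
      rintro s ⟨hs1, hs2⟩
      exact ⟨hs2.1, hs1.le⟩
    have hinj' : InjOn (glueFun a rc l) (Ico 0 c') := by
      intro t1 h1 t2 h2 he
      set d := max (max t1 t2) a.c with hd
      have hdc' : d < c' := max_lt (max_lt h1.2 h2.2) hcc'
      have hargd : ∀ s, a.c ≤ s → s ≤ d → l - (s - a.c) ∈ rc.I :=
        fun s hs1 hs2 => harg s hs1 (lt_of_le_of_lt hs2 hdc')
      have hdisd : ∀ s, a.c ≤ s → s ≤ d → rc.inv (l - (s - a.c)) ∉ a.U :=
        fun s hs1 hs2 => hdis s hs1 (lt_of_le_of_lt hs2 hdc')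
      exact glue_inj a rc hargd hdisd
        ⟨h1.1, le_max_of_le_left (le_max_left _ _)⟩
        ⟨h2.1, le_max_of_le_left (le_max_right _ _)⟩ he
    have himg' : glueFun a rc l '' Ico 0 c' = a.U ∪ rc.V := by
      apply Subset.antisymm
      · rintro _ ⟨t, ht, rfl⟩
        rcases lt_or_ge t a.c with h | h
        · left; rw [glueFun_left a rc h]; exact a.mem_U ⟨ht.1, h⟩
        · right
          rw [glueFun_right a rc h]
          exact rc.inv_mem (harg t h ht.2)
      · rintro x (hx | hx)
        · obtain ⟨t, ht, rfl⟩ := hx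
          exact ⟨t, ⟨ht.1, lt_trans ht.2 hcc'⟩, glueFun_left a rc ht.2⟩
        · by_cases hxU : x ∈ a.U
          · obtain ⟨t, ht, rfl⟩ := hxU
            exact ⟨t, ⟨ht.1, lt_trans ht.2 hcc'⟩, glueFun_left a rc ht.2⟩
          · have h1 : rc.psi x ∈ rc.I := rc.mem_I hx
            have h2 : rc.psi x ∉ Ioo l Lam := fun h => hxU ((hUV x hx).2 h)
            rw [rc.I_subset_Ioo hh] at h1
            have h3 : rc.psi x ≤ l := by
              by_contra h4
              exact h2 ⟨not_le.1 h4, hLam1 ▸ h1.2⟩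
            refine ⟨a.c + (l - rc.psi x), ⟨by linarith [a.pos, h1.1, h3], ?_⟩, ?_⟩
            · rw [hc']; linarith [h1.1]
            · rw [glueFun_right a rc (by linarith [h1.1, h3])]
              rw [show l - (a.c + (l - rc.psi x) - a.c) = rc.psi x by ring]
              exact rc.linv hx
    -- the inverse of the extended arc
    set gi : X → ℝ := fun x => if x ∈ a.U then a.ginv x else a.c + (l - rc.psi x) with hgi
    have hgiU : EqOn gi a.ginv a.U := fun x hx => if_pos hx
    have hlinv' : ∀ ⦃t⦄, t ∈ Ico 0 c' → gi (glueFun a rc l t) = t := by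
      intro t ht
      rcases lt_or_ge t a.c with h | h
      · rw [glueFun_left a rc h, hgi]
        simp only [if_pos (a.mem_U ⟨ht.1, h⟩)]
        exact a.linv ⟨ht.1, h⟩
      · rw [glueFun_right a rc h, hgi]
        simp only [if_neg (hdis t h ht.2)]
        rw [rc.rinv (harg t h ht.2)]
        ring
    -- continuity of the inverse
    have htau : ∀ y ∈ Ioo l Lam, rc.inv y ∈ a.U ∩ rc.V ∧
        a.gam (a.ginv (rc.inv y)) = rc.inv y ∧ a.ginv (rc.inv y) ∈ Ioo p a.c ∧
        sig a rc (a.ginv (rc.inv y)) = y := by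
      intro y hy
      have hyI : y ∈ rc.I := by
        rw [rc.I_subset_Ioo hh]
        exact ⟨lt_trans hlm hy.1, hLam1 ▸ hy.2⟩
      have h1 : rc.inv y ∈ rc.V := rc.inv_mem hyI
      have h2 : rc.inv y ∈ a.U := (hUV _ h1).2 (by rwa [rc.rinv hyI])
      obtain ⟨h3, h4⟩ := a.ginv_spec h2
      have h5 : a.ginv (rc.inv y) ∈ Tset a rc := ⟨h3, by rw [h4]; exact h1⟩
      rw [hT] at h5
      refine ⟨⟨h2, h1⟩, h4, h5, ?_⟩
      show rc.psi (a.gam (a.ginv (rc.inv y))) = y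
      rw [h4]
      exact rc.rinv hyI
    set tau : ℝ → ℝ := fun y => a.ginv (rc.inv y) with htaudef
    have htauanti : StrictAntiOn tau (Ioo l Lam) := by
      intro y1 hy1 y2 hy2 hlt
      obtain ⟨-, -, hm1, hs1⟩ := htau y1 hy1
      obtain ⟨-, -, hm2, hs2⟩ := htau y2 hy2
      rcases lt_trichotomy (tau y2) (tau y1) with h | h | h
      · exact h
      · exfalso
        have he2 : y2 = y1 := by
          have h3 : sig a rc (a.ginv (rc.inv y2)) = sig a rc (a.ginv (rc.inv y1)) := by
            show sig a rc (tau y2) = sig a rc (tau y1)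
            rw [h]
          rwa [hs1, hs2] at h3
        linarith
      · exfalso
        have := hanti hm1 hm2 h
        rw [hs1, hs2] at this
        linarith
    have htauimg : tau '' Ioo l Lam = Ioo p a.c := by
      apply Subset.antisymm
      · rintro _ ⟨y, hy, rfl⟩
        exact (htau y hy).2.2.1
      · intro t ht
        refine ⟨sig a rc t, hbounds t ht, ?_⟩
        rw [htaudef]
        show a.ginv (rc.inv (rc.psi (a.gam t))) = t
        rw [rc.linv (hsub ht).2, a.linv (hsub ht).1]
    have htautd : Tendsto tau (𝓝[Ioo l Lam] l) (𝓝 a.c) := by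
      have hbddA2 : BddAbove (tau '' Ioo l Lam) := by
        rw [htauimg]; exact bddAbove_Ioo
      have h1 := AntitoneOn.tendsto_nhdsWithin_Ioo_right (nonempty_Ioo.2 hlLam)
        htauanti.antitoneOn hbddA2
      rw [htauimg] at h1
      rw [csSup_Ioo hpc] at h1
      exact h1.mono_left (nhdsWithin_mono _ (fun y hy => hy.1))
    -- continuity of the reparametrization G on the model interval
    set G : ℝ → ℝ := fun y => if l < y then tau y else a.c + (l - y) with hG
    have hIooI : Ioo l Lam ⊆ rc.I := by
      intro y hy
      rw [rc.I_subset_Ioo hh]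
      exact ⟨lt_trans hlm hy.1, hLam1 ▸ hy.2⟩
    have htaucont : ContinuousOn tau (Ioo l Lam) := by
      refine ContinuousOn.comp (t := a.U) a.cinv' (rc.cinv'.mono hIooI) ?_
      intro y hy
      exact (htau y hy).1.1
    have hGcont : ContinuousOn G rc.I := by
      intro y hy
      have hyIoo : y ∈ Ioo (-1:ℝ) 1 := by rwa [rc.I_subset_Ioo hh] at hy
      rcases lt_trichotomy y l with hyl | hyl | hyl
      · -- below l : affine
        have h1 : ContinuousWithinAt (fun z => a.c + (l - z)) rc.I y :=
          (continuous_const.add (continuous_const.sub continuous_id)).continuousWithinAt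
        refine h1.congr_of_eventuallyEq ?_ ?_
        · have h2 : Iio l ∈ 𝓝[rc.I] y := mem_nhdsWithin_of_mem_nhds (Iio_mem_nhds hyl)
          filter_upwards [h2] with z hz
          show G z = a.c + (l - z)
          show (if l < z then tau z else a.c + (l - z)) = a.c + (l - z)
          rw [if_neg (not_lt.2 (mem_Iio.1 hz).le)]
        · show G y = a.c + (l - y)
          show (if l < y then tau y else a.c + (l - y)) = a.c + (l - y)
          rw [if_neg (not_lt.2 hyl.le)]
      · -- at l
        rw [hyl] at hyIoo ⊢
        have hGy : G l = a.c := by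
          show (if l < l then tau l else a.c + (l - l)) = a.c
          rw [if_neg (lt_irrefl l)]
          ring
        have hleft : ContinuousWithinAt G (rc.I ∩ Iic l) l := by
          have h1 : ContinuousWithinAt (fun z => a.c + (l - z)) (rc.I ∩ Iic l) l :=
            (continuous_const.add (continuous_const.sub continuous_id)).continuousWithinAt
          refine h1.congr ?_ ?_
          · rintro z ⟨hz1, hz2⟩
            show (if l < z then tau z else a.c + (l - z)) = a.c + (l - z)
            rw [if_neg (not_lt.2 (mem_Iic.1 hz2))]
          · rw [hGy]; ring
        have hright : ContinuousWithinAt G (rc.I ∩ Ioi l) l := by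
          show Tendsto G (𝓝[rc.I ∩ Ioi l] l) (𝓝 (G l))
          rw [hGy]
          have h2 : rc.I ∩ Ioi l ⊆ Ioo l Lam := by
            rintro z ⟨hz1, hz2⟩
            rw [rc.I_subset_Ioo hh] at hz1
            exact ⟨hz2, hLam1 ▸ hz1.2⟩
          refine Tendsto.congr' ?_ (htautd.mono_left (nhdsWithin_mono _ h2))
          refine eventually_nhdsWithin_of_forall (fun z hz => ?_)
          show tau z = G z
          show tau z = (if l < z then tau z else a.c + (l - z))
          rw [if_pos (mem_Ioi.1 hz.2)]
        refine (hleft.union hright).mono ?_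
        intro z hz
        rcases le_or_gt z l with h | h
        · exact Or.inl ⟨hz, h⟩
        · exact Or.inr ⟨hz, h⟩
      · -- above l : tau
        have h2 : rc.I ∩ Ioi l ⊆ Ioo l Lam := by
          rintro z ⟨hz1, hz2⟩
          rw [rc.I_subset_Ioo hh] at hz1
          exact ⟨hz2, hLam1 ▸ hz1.2⟩
        have h1 : ContinuousWithinAt tau (Ioo l Lam) y :=
          htaucont y ⟨hyl, hLam1 ▸ hyIoo.2⟩
        have h3 : ContinuousWithinAt tau (rc.I ∩ Ioi l) y := h1.mono h2
        have h4 : ContinuousWithinAt G (rc.I ∩ Ioi l) y := by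
          refine h3.congr ?_ ?_
          · rintro z ⟨hz1, hz2⟩
            show (if l < z then tau z else a.c + (l - z)) = tau z
            rw [if_pos (mem_Ioi.1 hz2)]
          · show (if l < y then tau y else a.c + (l - y)) = tau y
            rw [if_pos hyl]
        refine h4.mono_of_mem_nhdsWithin ?_
        refine mem_nhdsWithin.2 ⟨Ioi l, isOpen_Ioi, hyl, ?_⟩
        rintro z ⟨hz1, hz2⟩
        exact ⟨hz2, hz1⟩
    have hgiV : EqOn gi (fun x => G (rc.psi x)) rc.V := by
      intro x hx
      by_cases hxU : x ∈ a.U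
      · have h1 : rc.psi x ∈ Ioo l Lam := (hUV x hx).1 hxU
        rw [hgi]
        simp only [if_pos hxU]
        rw [hG]
        simp only [if_pos h1.1]
        rw [htaudef]
        show a.ginv x = a.ginv (rc.inv (rc.psi x))
        rw [rc.linv hx]
      · have h1 : rc.psi x ∈ rc.I := rc.mem_I hx
        have h2 : rc.psi x ∉ Ioo l Lam := fun h => hxU ((hUV x hx).2 h)
        rw [rc.I_subset_Ioo hh] at h1
        have h3 : rc.psi x ≤ l := by
          by_contra h4
          exact h2 ⟨not_le.1 h4, hLam1 ▸ h1.2⟩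
        rw [hgi]
        simp only [if_neg hxU]
        rw [hG]
        simp only [if_neg (not_lt.2 h3)]
    have hcinv' : ContinuousOn gi (a.U ∪ rc.V) := by
      intro x hx
      rcases hx with hxU | hxV
      · have h1 : ContinuousOn gi a.U := a.cinv'.congr hgiU
        exact ((h1.continuousAt (a.opn.mem_nhds hxU)).continuousWithinAt)
      · have h1 : ContinuousOn gi rc.V :=
          ((hGcont.comp rc.cont (fun z hz => rc.mem_I hz)).congr hgiV)
        exact ((h1.continuousAt (rc.opn.mem_nhds hxV)).continuousWithinAt)
    refine ⟨⟨c', lt_trans a.pos hcc', glueFun a rc l, gi, ?_, hcont', ?_, hlinv', ?_⟩, ?_⟩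
    · rw [glueFun_left a rc a.pos]; exact a.start
    · show IsOpen (glueFun a rc l '' Ico 0 c')
      rw [himg']
      exact a.opn.union rc.opn
    · show ContinuousOn gi (glueFun a rc l '' Ico 0 c')
      rw [himg']
      exact hcinv'
    · show a.U ∪ rc.V ⊆ glueFun a rc l '' Ico 0 c'
      rw [himg']

/-- An interior stopping end of a half chart cannot carry the infimum limit. -/
lemma half_inf_false (hh : rc.half = true) {u v e : ℝ} (huv : u < v)
    (hsub : Ioo u v ⊆ Tset a rc) (heI : e ∈ Ico 0 a.c) (heT : e ∉ Tset a rc)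
    (hNe : (𝓝[Ioo u v] e).NeBot)
    (htd : Tendsto (sig a rc) (𝓝[Ioo u v] e) (𝓝 (sInf (sig a rc '' Ioo u v)))) : False := by
  have hne : (Ioo u v).Nonempty := nonempty_Ioo.2 huv
  have hbddB : BddBelow (sig a rc '' Ioo u v) := by
    refine ⟨-1, ?_⟩; rintro _ ⟨s, hs, rfl⟩; exact (neg_one_lt_sig a rc (hsub hs)).le
  have hnotI := endpoint_not_mem_I a rc hsub heI (fun h => heT ⟨heI, h⟩) hNe htd
  have hcl : sInf (sig a rc '' Ioo u v) ∈ closure rc.I := by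
    refine closure_mono ?_ (csInf_mem_closure (hne.image _) hbddB)
    rintro _ ⟨s, hs, rfl⟩; exact sig_mem_I a rc (hsub hs)
  rw [rc.I_subset_Ico hh] at hnotI hcl
  rw [closure_Ico (by norm_num : (0:ℝ) ≠ 1)] at hcl
  have hlam : sInf (sig a rc '' Ioo u v) = 1 := by
    by_contra hnel
    exact hnotI ⟨hcl.1, lt_of_le_of_ne hcl.2 hnel⟩
  obtain ⟨s0, hs0⟩ := hne
  have h1 : sInf (sig a rc '' Ioo u v) ≤ sig a rc s0 := csInf_le hbddB (mem_image_of_mem _ hs0)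
  have h2 := sig_lt_one a rc (hsub hs0)
  rw [hlam] at h1
  linarith

/-- The MERGE lemma: a chart meeting an arc is either contained in it, or completes the
component, or extends the arc. -/
lemma merge (hb : b ∈ (𝓡∂ 1).boundary X) (hset : (rc.V ∩ a.U).Nonempty) :
    rc.V ⊆ a.U ∨ Pairing b ∨ ∃ a' : Arc X b, a.U ∪ rc.V ⊆ a'.U := by
  obtain ⟨x, hxV, hxU⟩ := hset
  obtain ⟨t0, ht0, rfl⟩ := hxU
  have hTne : (Tset a rc).Nonempty := ⟨t0, ht0, hxV⟩
  rcases Tset_shape a rc hb hTne with ⟨p, q, hp0, hpq, hqc, hpT, hqT, hT⟩ | ⟨q, hq0, hqc, hqT, hT⟩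
  · -- T = Ioo p q
    rcases eq_or_lt_of_le hqc with hqeq | hqlt
    · -- q = a.c : tail case
      subst hqeq
      have hsub : Ioo p a.c ⊆ Tset a rc := by rw [hT]
      have hcont : ContinuousOn (sig a rc) (Ioo p a.c) := (sig_contOn a rc).mono hsub
      have hinj : InjOn (sig a rc) (Ioo p a.c) := (sig_injOn a rc).mono hsub
      rcases strictMonoOn_or_strictAntiOn ordConnected_Ioo hcont hinj with hm | ha
      · cases hhalf : rc.half
        · -- open chart, increasing : negate
          set rc' := rc.neg hhalf with hrc'
          have hanti' : StrictAntiOn (sig a rc') (Ioo p a.c) := by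
            intro x1 h1 x2 h2 hlt
            show -(sig a rc x2) < -(sig a rc x1)
            exact neg_lt_neg (hm h1 h2 hlt)
          have hT' : Tset a rc' = Ioo p a.c := hT
          rcases extension_arc a rc' rfl hp0 hpq hT' hanti' with h | ⟨a', ha'⟩
          · exact Or.inl h
          · exact Or.inr (Or.inr ⟨a', ha'⟩)
        · exact (tail_mono_false a rc hhalf hsub hp0 hpq
            (by rw [hT]; exact fun h => lt_irrefl p h.1) hm).elim
      · cases hhalf : rc.half
        · rcases extension_arc a rc hhalf hp0 hpq hT ha with h | ⟨a', ha'⟩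
          · exact Or.inl h
          · exact Or.inr (Or.inr ⟨a', ha'⟩)
        · exact Or.inr (Or.inl (terminal_pairing a rc hb hhalf hp0 hpq hT ha))
    · -- q < a.c : interior crossing
      have hsub : Ioo p q ⊆ Tset a rc := by rw [hT]
      have hcont : ContinuousOn (sig a rc) (Ioo p q) := (sig_contOn a rc).mono hsub
      have hinj : InjOn (sig a rc) (Ioo p q) := (sig_injOn a rc).mono hsub
      have hpI : p ∈ Ico 0 a.c := ⟨hp0, lt_trans hpq hqlt⟩
      have hqI : q ∈ Ico 0 a.c := ⟨le_trans hp0 hpq.le, hqlt⟩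
      have hp_nT : p ∉ Tset a rc := hpT
      have hq_nT : q ∉ Tset a rc := hqT
      have hne : (Ioo p q).Nonempty := nonempty_Ioo.2 hpq
      have hbddB : BddBelow (sig a rc '' Ioo p q) := by
        refine ⟨-1, ?_⟩; rintro _ ⟨s, hs, rfl⟩; exact (neg_one_lt_sig a rc (hsub hs)).le
      have hbddA : BddAbove (sig a rc '' Ioo p q) := by
        refine ⟨1, ?_⟩; rintro _ ⟨s, hs, rfl⟩; exact (sig_lt_one a rc (hsub hs)).le
      have hNep : (𝓝[Ioo p q] p).NeBot := by
        rw [nhdsWithin_Ioo_eq_nhdsGT hpq]; infer_instance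
      have hNeq : (𝓝[Ioo p q] q).NeBot := by
        rw [nhdsWithin_Ioo_eq_nhdsLT hpq]; infer_instance
      -- both ends carry the limits sInf and sSup (in some order)
      have hlimits : Tendsto (sig a rc) (𝓝[Ioo p q] p) (𝓝 (sInf (sig a rc '' Ioo p q))) ∧
          Tendsto (sig a rc) (𝓝[Ioo p q] q) (𝓝 (sSup (sig a rc '' Ioo p q))) ∨
          Tendsto (sig a rc) (𝓝[Ioo p q] q) (𝓝 (sInf (sig a rc '' Ioo p q))) ∧
          Tendsto (sig a rc) (𝓝[Ioo p q] p) (𝓝 (sSup (sig a rc '' Ioo p q))) := by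
        rcases strictMonoOn_or_strictAntiOn ordConnected_Ioo hcont hinj with hm | ha
        · left
          constructor
          · exact (MonotoneOn.tendsto_nhdsWithin_Ioo_right hne hm.monotoneOn hbddB).mono_left
              (nhdsWithin_mono _ (fun t ht => ht.1))
          · exact (MonotoneOn.tendsto_nhdsWithin_Ioo_left hne hm.monotoneOn hbddA).mono_left
              (nhdsWithin_mono _ (fun t ht => ht.2))
        · right
          constructor
          · exact (AntitoneOn.tendsto_nhdsWithin_Ioo_left hne ha.antitoneOn hbddB).mono_left
              (nhdsWithin_mono _ (fun t ht => ht.2))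
          · exact (AntitoneOn.tendsto_nhdsWithin_Ioo_right hne ha.antitoneOn hbddA).mono_left
              (nhdsWithin_mono _ (fun t ht => ht.1))
      have hinf_td : Tendsto (sig a rc) (𝓝[Ioo p q] p) (𝓝 (sInf (sig a rc '' Ioo p q))) ∨
          Tendsto (sig a rc) (𝓝[Ioo p q] q) (𝓝 (sInf (sig a rc '' Ioo p q))) := by
        rcases hlimits with ⟨h1, -⟩ | ⟨h1, -⟩
        · exact Or.inl h1
        · exact Or.inr h1
      have hsup_td : Tendsto (sig a rc) (𝓝[Ioo p q] p) (𝓝 (sSup (sig a rc '' Ioo p q))) ∨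
          Tendsto (sig a rc) (𝓝[Ioo p q] q) (𝓝 (sSup (sig a rc '' Ioo p q))) := by
        rcases hlimits with ⟨-, h1⟩ | ⟨-, h1⟩
        · exact Or.inr h1
        · exact Or.inl h1
      cases hhalf : rc.half
      · -- open chart : the image must be the full model interval
        have hinf_notI : sInf (sig a rc '' Ioo p q) ∉ rc.I := by
          rcases hinf_td with h | h
          · exact endpoint_not_mem_I a rc hsub hpI (fun hx => hp_nT ⟨hpI, hx⟩) hNep h
          · exact endpoint_not_mem_I a rc hsub hqI (fun hx => hq_nT ⟨hqI, hx⟩) hNeq h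
        have hsup_notI : sSup (sig a rc '' Ioo p q) ∉ rc.I := by
          rcases hsup_td with h | h
          · exact endpoint_not_mem_I a rc hsub hpI (fun hx => hp_nT ⟨hpI, hx⟩) hNep h
          · exact endpoint_not_mem_I a rc hsub hqI (fun hx => hq_nT ⟨hqI, hx⟩) hNeq h
        have hsubI : sig a rc '' Ioo p q ⊆ Ioo (-1:ℝ) 1 := by
          rintro _ ⟨s, hs, rfl⟩
          exact ⟨neg_one_lt_sig a rc (hsub hs), sig_lt_one a rc (hsub hs)⟩
        have hclI : closure (sig a rc '' Ioo p q) ⊆ Icc (-1:ℝ) 1 := by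
          rw [← closure_Ioo (by norm_num : (-1:ℝ) ≠ 1)]
          exact closure_mono hsubI
        obtain ⟨s0, hs0⟩ := id hne
        have hinfm : sInf (sig a rc '' Ioo p q) ∈ Icc (-1:ℝ) 1 :=
          hclI (csInf_mem_closure (hne.image _) hbddB)
        have hsupm : sSup (sig a rc '' Ioo p q) ∈ Icc (-1:ℝ) 1 :=
          hclI (csSup_mem_closure (hne.image _) hbddA)
        rw [rc.I_subset_Ioo hhalf] at hinf_notI hsup_notI
        have hinfe : sInf (sig a rc '' Ioo p q) = -1 := by
          rcases eq_or_lt_of_le hinfm.1 with h | h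
          · exact h.symm
          · exfalso
            have h2 : sInf (sig a rc '' Ioo p q) < 1 := by
              have := csInf_le hbddB (mem_image_of_mem _ hs0)
              have h3 := sig_lt_one a rc (hsub hs0)
              linarith
            exact hinf_notI ⟨h, h2⟩
        have hsupe : sSup (sig a rc '' Ioo p q) = 1 := by
          rcases eq_or_lt_of_le hsupm.2 with h | h
          · exact h
          · exfalso
            have h2 : -1 < sSup (sig a rc '' Ioo p q) := by
              have := le_csSup hbddA (mem_image_of_mem _ hs0)
              have h3 := neg_one_lt_sig a rc (hsub hs0)
              linarith
            exact hsup_notI ⟨h2, h⟩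
        left
        refine V_subset_of_image a rc ?_
        rw [rc.I_subset_Ioo hhalf, hT]
        intro y hy
        have hoc : (sig a rc '' Ioo p q).OrdConnected :=
          (isPreconnected_Ioo.image _ hcont).ordConnected
        obtain ⟨y1, hy1, hy1lt⟩ := (csInf_lt_iff hbddB (hne.image _)).1 (hinfe ▸ hy.1)
        obtain ⟨y2, hy2, hy2gt⟩ := (lt_csSup_iff hbddA (hne.image _)).1 (hsupe ▸ hy.2)
        exact hoc.out hy1 hy2 ⟨hy1lt.le, hy2gt.le⟩
      · -- half chart : impossible
        exfalso
        rcases hinf_td with h | h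
        · exact half_inf_false a rc hhalf hpq hsub hpI hp_nT hNep h
        · exact half_inf_false a rc hhalf hpq hsub hqI hq_nT hNeq h
  · -- T = Ico 0 q : the start of the arc is in the chart
    have h0T : (0:ℝ) ∈ Tset a rc := by rw [hT]; exact ⟨le_rfl, hq0⟩
    have hbV : b ∈ rc.V := by
      have := h0T.2
      rwa [a.start] at this
    cases hhalf : rc.half
    · exfalso
      refine absurd hb (not_bd_of_rc rc hbV ?_)
      intro h
      rw [h] at hhalf
      exact absurd hhalf (by simp)
    · have hpsi0 : rc.psi b = 0 := by
        by_contra hpsi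
        exact absurd hb (not_bd_of_rc rc hbV (fun _ => hpsi))
      have hsig0 : sig a rc 0 = 0 := by
        show rc.psi (a.gam 0) = 0
        rw [a.start]
        exact hpsi0
      have hsub : Ico 0 q ⊆ Tset a rc := by rw [hT]
      have hcont : ContinuousOn (sig a rc) (Ico 0 q) := (sig_contOn a rc).mono hsub
      have hinj : InjOn (sig a rc) (Ico 0 q) := (sig_injOn a rc).mono hsub
      have hnonneg : ∀ s ∈ Ico 0 q, 0 ≤ sig a rc s := by
        intro s hs
        have := sig_mem_I a rc (hsub hs)
        rw [rc.I_subset_Ico hhalf] at this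
        exact this.1
      have hmono : StrictMonoOn (sig a rc) (Ico 0 q) := by
        rcases strictMonoOn_or_strictAntiOn ordConnected_Ico hcont hinj with hm | ha
        · exact hm
        · exfalso
          have h1 := ha ⟨le_rfl, hq0⟩ ⟨by linarith, by linarith⟩ (by linarith : (0:ℝ) < q/2)
          rw [hsig0] at h1
          exact absurd (hnonneg (q/2) ⟨by linarith, by linarith⟩) (not_le.2 h1)
      rcases eq_or_lt_of_le hqc with hqeq | hqlt
      · -- q = a.c : the whole arc is inside the chart
        right; right
        refine ⟨arcOfChart rc hhalf hbV hpsi0, ?_⟩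
        rw [arcOfChart_U]
        intro x hx
        rcases hx with hx | hx
        · obtain ⟨t, ht, rfl⟩ := hx
          have : t ∈ Tset a rc := by rw [hT, ← hqeq] at *; exact hsub ht
          exact this.2
        · exact hx
      · -- q < a.c : the chart is inside the arc
        left
        refine V_subset_of_image a rc ?_
        rw [rc.I_subset_Ico hhalf, hT]
        have hsubo : Ioo 0 q ⊆ Tset a rc := fun s hs => hsub ⟨hs.1.le, hs.2⟩
        have hneo : (Ioo 0 q).Nonempty := nonempty_Ioo.2 hq0
        have hbddAo : BddAbove (sig a rc '' Ioo 0 q) := by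
          refine ⟨1, ?_⟩; rintro _ ⟨s, hs, rfl⟩; exact (sig_lt_one a rc (hsubo hs)).le
        have hNeq : (𝓝[Ioo 0 q] q).NeBot := by
          rw [nhdsWithin_Ioo_eq_nhdsLT hq0]; infer_instance
        have hmono' : StrictMonoOn (sig a rc) (Ioo 0 q) :=
          hmono.mono (fun s hs => ⟨hs.1.le, hs.2⟩)
        have htd : Tendsto (sig a rc) (𝓝[Ioo 0 q] q) (𝓝 (sSup (sig a rc '' Ioo 0 q))) :=
          (MonotoneOn.tendsto_nhdsWithin_Ioo_left hneo hmono'.monotoneOn hbddAo).mono_left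
            (nhdsWithin_mono _ (fun t ht => ht.2))
        have hqI : q ∈ Ico 0 a.c := ⟨hq0.le, hqlt⟩
        have hnotI := endpoint_not_mem_I a rc hsubo hqI (fun hx => hqT ⟨hqI, hx⟩) hNeq htd
        have hcl : sSup (sig a rc '' Ioo 0 q) ∈ closure rc.I := by
          refine closure_mono ?_ (csSup_mem_closure (hneo.image _) hbddAo)
          rintro _ ⟨s, hs, rfl⟩; exact sig_mem_I a rc (hsubo hs)
        rw [rc.I_subset_Ico hhalf] at hnotI hcl
        rw [closure_Ico (by norm_num : (0:ℝ) ≠ 1)] at hcl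
        have hsupe : sSup (sig a rc '' Ioo 0 q) = 1 := by
          by_contra hnel
          exact hnotI ⟨hcl.1, lt_of_le_of_ne hcl.2 hnel⟩
        intro y hy
        have hoc : (sig a rc '' Ico 0 q).OrdConnected :=
          (isPreconnected_Ico.image _ hcont).ordConnected
        have h0img : (0:ℝ) ∈ sig a rc '' Ico 0 q := by
          refine ⟨0, ⟨le_rfl, hq0⟩, hsig0⟩
        obtain ⟨y2, hy2, hy2gt⟩ := (lt_csSup_iff hbddAo (hneo.image _)).1 (hsupe ▸ hy.2)
        have hy2' : y2 ∈ sig a rc '' Ico 0 q := by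
          obtain ⟨s, hs, rfl⟩ := hy2
          exact ⟨s, ⟨hs.1.le, hs.2⟩, rfl⟩
        exact hoc.out h0img hy2' ⟨hy.1, hy2gt.le⟩

/-- Every boundary point has a unique partner in its connected component. -/
lemma exists_pairing {b : X} (hb : b ∈ (𝓡∂ 1).boundary X) : Pairing b := by
  classical
  -- a finite cover by real charts
  have hch : ∀ x : X, ∃ rcx : RC X, x ∈ rcx.V := by
    intro x
    obtain ⟨rcx, h1, -, -⟩ := exists_rc x
    exact ⟨rcx, h1⟩
  choose rcs hrcs using hch
  obtain ⟨t, ht⟩ := isCompact_univ.elim_finite_subcover (fun x => (rcs x).V)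
    (fun x => (rcs x).opn) (fun x _ => mem_iUnion.2 ⟨x, hrcs x⟩)
  -- the initial arc
  obtain ⟨rcb, hbV, hb0, hbiff⟩ := exists_rc b
  have hbhalf : rcb.half = true := hbiff.2 hb
  have main : ∀ n : ℕ, ∀ a : Arc X b,
      (t.filter (fun x => ¬ ((rcs x).V ⊆ a.U))).card ≤ n → Pairing b := by
    intro n
    induction n with
    | zero =>
      intro a hcard
      exfalso
      have hall : ∀ x ∈ t, (rcs x).V ⊆ a.U := by
        intro x hx
        by_contra hVU
        have : x ∈ t.filter (fun x => ¬ ((rcs x).V ⊆ a.U)) := Finset.mem_filter.2 ⟨hx, hVU⟩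
        have h2 := Finset.card_pos.2 ⟨x, this⟩
        omega
      have huniv : a.U = univ := by
        apply Subset.antisymm (subset_univ _)
        intro y _
        obtain ⟨x, hxt, hxV⟩ := by
          have := ht (mem_univ y)
          simpa only [mem_iUnion, exists_prop] using this
        exact hall x hxt hxV
      have hUcompact : IsCompact a.U := by rw [huniv]; exact isCompact_univ
      have hIcoimg : a.ginv '' a.U = Ico 0 a.c := by
        apply Subset.antisymm
        · rintro _ ⟨x, hx, rfl⟩
          exact (a.ginv_spec hx).1
        · intro s hs
          exact ⟨a.gam s, a.mem_U hs, a.linv hs⟩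
      have hIcocompact : IsCompact (Ico 0 a.c) := by
        rw [← hIcoimg]
        exact hUcompact.image_of_continuousOn a.cinv'
      have h3 : a.c ∈ closure (Ico 0 a.c) := by
        rw [closure_Ico (ne_of_lt a.pos)]
        exact ⟨a.pos.le, le_rfl⟩
      rw [hIcocompact.isClosed.closure_eq] at h3
      exact lt_irrefl a.c h3.2
    | succ n ih =>
      intro a hcard
      by_cases hall : ∀ x ∈ t, ((rcs x).V ⊆ a.U) ∨ ((rcs x).V ∩ a.U) = ∅
      · -- the arc is clopen : contradiction with compactness as above
        exfalso
        have hUclosed : IsClosed a.U := by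
          rw [← isOpen_compl_iff, isOpen_iff_forall_mem_open]
          intro y hy
          obtain ⟨x, hxt, hxV⟩ := by
            have := ht (mem_univ y)
            simpa only [mem_iUnion, exists_prop] using this
          rcases hall x hxt with h | h
          · exact absurd (h hxV) hy
          · refine ⟨(rcs x).V, ?_, (rcs x).opn, hxV⟩
            intro z hz hzU
            rw [eq_empty_iff_forall_notMem] at h
            exact h z ⟨hz, hzU⟩
        have hUcompact : IsCompact a.U := hUclosed.isCompact
        have hIcoimg : a.ginv '' a.U = Ico 0 a.c := by
          apply Subset.antisymm
          · rintro _ ⟨x, hx, rfl⟩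
            exact (a.ginv_spec hx).1
          · intro s hs
            exact ⟨a.gam s, a.mem_U hs, a.linv hs⟩
        have hIcocompact : IsCompact (Ico 0 a.c) := by
          rw [← hIcoimg]
          exact hUcompact.image_of_continuousOn a.cinv'
        have h3 : a.c ∈ closure (Ico 0 a.c) := by
          rw [closure_Ico (ne_of_lt a.pos)]
          exact ⟨a.pos.le, le_rfl⟩
        rw [hIcocompact.isClosed.closure_eq] at h3
        exact lt_irrefl a.c h3.2
      · push_neg at hall
        obtain ⟨x, hxt, hVU, hVint⟩ := hall
        rcases merge a (rcs x) hb hVint with h | h | ⟨a', ha'⟩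
        · exact absurd h hVU
        · exact h
        · refine ih a' ?_
          have hsub2 : t.filter (fun y => ¬ ((rcs y).V ⊆ a'.U)) ⊆
              (t.filter (fun y => ¬ ((rcs y).V ⊆ a.U))).erase x := by
            intro y hy
            rw [Finset.mem_filter] at hy
            rw [Finset.mem_erase, Finset.mem_filter]
            refine ⟨?_, hy.1, ?_⟩
            · intro hyx
              subst hyx
              exact hy.2 (subset_trans (subset_union_right) ha')
            · intro hsubU
              exact hy.2 (subset_trans hsubU (subset_trans subset_union_left ha'))
          have hxmem : x ∈ t.filter (fun y => ¬ ((rcs y).V ⊆ a.U)) :=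
            Finset.mem_filter.2 ⟨hxt, hVU⟩
          calc (t.filter (fun y => ¬ ((rcs y).V ⊆ a'.U))).card
              ≤ ((t.filter (fun y => ¬ ((rcs y).V ⊆ a.U))).erase x).card :=
                Finset.card_le_card hsub2
            _ = (t.filter (fun y => ¬ ((rcs y).V ⊆ a.U))).card - 1 :=
                Finset.card_erase_of_mem hxmem
            _ ≤ n := by omega
  exact main _ (arcOfChart rcb hbhalf hbV hb0) le_rfl

end Merge

/-- A finite set with a fixed-point-free involution has even cardinality. -/
lemma even_ncard_involution : ∀ (n : ℕ) {α : Type*} (s : Set α), s.ncard = n → s.Finite →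
    ∀ (f : α → α), (∀ x ∈ s, f x ∈ s) → (∀ x ∈ s, f (f x) = x) → (∀ x ∈ s, f x ≠ x) →
    Even n := by
  intro n
  induction n using Nat.strong_induction_on with
  | _ n ih =>
    intro α s hn hfin f hmem hinv hfix
    rcases s.eq_empty_or_nonempty with rfl | ⟨a, ha⟩
    · rw [Set.ncard_empty] at hn
      rw [← hn]
      exact Even.zero
    · have hfa : f a ∈ s := hmem a ha
      have hfane : f a ≠ a := hfix a ha
      set s' := s \ {a, f a} with hs'
      have hpairsub : {a, f a} ⊆ s := by
        intro y hy
        rcases hy with rfl | rfl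
        · exact ha
        · exact hfa
      have hs'fin : s'.Finite := hfin.subset diff_subset
      have hpaircard : ({a, f a} : Set α).ncard = 2 := Set.ncard_pair (Ne.symm hfane)
      have hcard' : s'.ncard = n - 2 := by
        rw [hs', Set.ncard_diff hpairsub (hfin.subset hpairsub), hpaircard, hn]
      have hn2 : 2 ≤ n := by
        rw [← hn, ← hpaircard]
        exact Set.ncard_le_ncard hpairsub hfin
      have hmem' : ∀ x ∈ s', f x ∈ s' := by
        rintro x ⟨hxs, hxp⟩
        refine ⟨hmem x hxs, ?_⟩
        simp only [mem_insert_iff, mem_singleton_iff] at hxp ⊢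
        push_neg at hxp
        rintro (h | h)
        · exact hxp.2 (by rw [← hinv x hxs, h])
        · refine hxp.1 ?_
          have h2 : f (f x) = f (f a) := by rw [h]
          rw [hinv x hxs, hinv a ha] at h2
          exact h2
      have hinv' : ∀ x ∈ s', f (f x) = x := fun x hx => hinv x hx.1
      have hfix' : ∀ x ∈ s', f x ≠ x := fun x hx => hfix x hx.1
      have heven' : Even (n - 2) :=
        ih (n - 2) (by omega) s' hcard' hs'fin f hmem' hinv' hfix'
      obtain ⟨k, hk⟩ := heven'
      exact ⟨k + 1, by omega⟩

end Stmt2Aux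

open Stmt2Aux

/-- A compact topological 1-manifold with boundary has a finite
boundary with an even number of points. -/
theorem stmt2 {X : Type*} [TopologicalSpace X] [T2Space X] [CompactSpace X]
    [ChartedSpace (EuclideanHalfSpace 1) X] :
    ((𝓡∂ 1).boundary X).Finite ∧ Even (((𝓡∂ 1).boundary X).ncard) := by
  classical
  refine ⟨bd_finite, ?_⟩
  have hpair : ∀ b ∈ (𝓡∂ 1).boundary X, Pairing b := fun b hb => exists_pairing hb
  choose! w hw using hpair
  have hwmem : ∀ b ∈ (𝓡∂ 1).boundary X, w b ∈ (𝓡∂ 1).boundary X := fun b hb => (hw b hb).1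
  have hwne : ∀ b ∈ (𝓡∂ 1).boundary X, w b ≠ b := fun b hb => (hw b hb).2.1
  have hwinv : ∀ b ∈ (𝓡∂ 1).boundary X, w (w b) = b := by
    intro b hb
    have h1 := hw b hb
    have h2 := hw (w b) h1.1
    have hbmem : b ∈ connectedComponent (w b) := by
      have hcc := connectedComponent_eq h1.2.2.1
      first
      | (rw [hcc]; exact mem_connectedComponent)
      | (rw [← hcc]; exact mem_connectedComponent)
    rcases h2.2.2.2 b hb hbmem with h | h
    · exact absurd h.symm h1.2.1
    · exact h.symm
  exact even_ncard_involution _ _ rfl bd_finite w hwmem hwinv hwne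

end
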